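/- arXiv:2511.01851 — 2 statements merged into one kernel-verified Lean document; each statement's English description precedes it below -/
import Mathlib

section
/- Let π : V(𝓛) → V(𝓢) be a fibration between graphs. Assume that 𝓢 is one-ended and that for every finite subset F of V(𝓢), denoting by K the infinite connected component of the complement of F in 𝓢, the subgraph of 𝓛 induced on π⁻¹(K) is connected. Then C*_E(𝓢) ≤ C_E(𝓛). -/
open MeasureTheory Set
open scoped ENNReal

namespace PercPaper

/-! ### The Bernoulli(p) product measure on `ι → Bool`

We realize the Bernoulli product measure as the pushforward of the uniform
measure on `[0,1)` under the standard digit-interleaving construction: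
the binary digits of a uniform point of `[0,1)` are i.i.d. fair coins; by
interleaving (via the pairing function `Nat.pair`) we extract countably many
independent uniform random variables, and thresholding each at `p` produces
i.i.d. Bernoulli(`p`) bits. -/

/-- The `k`-th binary digit of a real number `x ∈ [0,1)`. -/
noncomputable def digit (k : ℕ) (x : ℝ) : Bool :=
  decide (⌊x * 2 ^ (k + 1)⌋ % 2 = 1)

/-- The `i`-th of countably many independent uniforms extracted from a single
uniform `x ∈ [0,1)` by digit interleaving. -/
noncomputable def unif (i : ℕ) (x : ℝ) : ℝ :=
  ∑' k : ℕ, if digit (Nat.pair i k) x then ((2 : ℝ) ^ (k + 1))⁻¹ else 0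

/-- The coordinates of the Bernoulli(`p`) product: coordinate `i` is `true`
("open") iff the `i`-th extracted uniform is `< p`. -/
noncomputable def coords (ι : Type) [Countable ι] (p : ℝ) (x : ℝ) : ι → Bool :=
  letI : Encodable ι := Encodable.ofCountable ι
  fun i => decide (unif (Encodable.encode i) x < p)

/-- The Bernoulli(`p`) product measure on `ι → Bool`. -/
noncomputable def bernoulliProd (ι : Type) [Countable ι] (p : ℝ) :
    Measure (ι → Bool) :=
  Measure.map (coords ι p) (volume.restrict (Set.Ico (0 : ℝ) 1))

/-! ### Graphs: the class of graphs under consideration -/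

/-- A simple, nonempty, locally finite, connected graph.  (Such a graph is
automatically countable; we record countability as a field.) -/
structure SpaceGraph : Type 1 where
  V : Type
  G : SimpleGraph V
  connected : G.Connected
  locallyFinite : ∀ v : V, (G.neighborSet v).Finite
  countableV : Countable V

instance (Γ : SpaceGraph) : Countable Γ.V := Γ.countableV

/-! ### Combinatorial notions on plain simple graphs -/

/-- `u` and `v` are `k`-adjacent: `1 ≤ d_G(u,v) ≤ k`. -/
def kAdj {V : Type} (G : SimpleGraph V) (k : ℕ) (u v : V) : Prop :=
  1 ≤ G.dist u v ∧ G.dist u v ≤ k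

/-- A set of vertices is `k`-connected if it is connected under `k`-adjacency. -/
def kConnectedSet {V : Type} (G : SimpleGraph V) (k : ℕ) (A : Set V) : Prop :=
  ∀ x ∈ A, ∀ y ∈ A,
    Relation.ReflTransGen (fun a b => a ∈ A ∧ b ∈ A ∧ kAdj G k a b) x y

/-- Two distinct edges are `k`-adjacent if some endpoint of one lies at
distance at most `k` from some endpoint of the other. -/
def edgeKAdj {V : Type} (G : SimpleGraph V) (k : ℕ) (e f : Sym2 V) : Prop :=
  e ≠ f ∧ ∃ x ∈ e, ∃ y ∈ f, G.dist x y ≤ k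

/-- A set of edges is `k`-connected if it is connected under `k`-adjacency. -/
def edgeKConnectedSet {V : Type} (G : SimpleGraph V) (k : ℕ) (A : Set (Sym2 V)) : Prop :=
  ∀ e ∈ A, ∀ f ∈ A,
    Relation.ReflTransGen (fun a b => a ∈ A ∧ b ∈ A ∧ edgeKAdj G k a b) e f

/-- `A` is a cutset between `u` and `v`: every walk from `u` to `v` meets `A`. -/
def IsCutset {V : Type} (G : SimpleGraph V) (A : Set V) (u v : V) : Prop :=
  ∀ w : G.Walk u v, ∃ x ∈ w.support, x ∈ A

/-- `A` is a minimal cutset between `u` and `v`. -/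
def IsMinCutset {V : Type} (G : SimpleGraph V) (A : Set V) (u v : V) : Prop :=
  IsCutset G A u v ∧ ∀ B : Set V, B ⊂ A → ¬IsCutset G B u v

/-- `C(G) ≤ k`: every minimal cutset between two vertices is `k`-connected. -/
def cutConnLe {V : Type} (G : SimpleGraph V) (k : ℕ) : Prop :=
  ∀ u v : V, ∀ A : Set V, IsMinCutset G A u v → kConnectedSet G k A

/-- `C*(G) ≤ k`: every finite minimal cutset between two vertices is `k`-connected. -/
def cutConnStarLe {V : Type} (G : SimpleGraph V) (k : ℕ) : Prop :=
  ∀ u v : V, ∀ A : Set V, A.Finite → IsMinCutset G A u v → kConnectedSet G k A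

/-- `A` is a bond-cutset between `u` and `v`: a set of edges of `G` such that
every walk from `u` to `v` uses an edge of `A`. -/
def IsBondCutset {V : Type} (G : SimpleGraph V) (A : Set (Sym2 V)) (u v : V) : Prop :=
  A ⊆ G.edgeSet ∧ ∀ w : G.Walk u v, ∃ e ∈ w.edges, e ∈ A

/-- `A` is a minimal bond-cutset between `u` and `v`. -/
def IsMinBondCutset {V : Type} (G : SimpleGraph V) (A : Set (Sym2 V)) (u v : V) : Prop :=
  IsBondCutset G A u v ∧ ∀ B : Set (Sym2 V), B ⊂ A → ¬IsBondCutset G B u v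

/-- `C_E(G) ≤ k`: every minimal bond-cutset between two vertices is `k`-connected. -/
def edgeCutConnLe {V : Type} (G : SimpleGraph V) (k : ℕ) : Prop :=
  ∀ u v : V, ∀ A : Set (Sym2 V), IsMinBondCutset G A u v → edgeKConnectedSet G k A

/-- `C*_E(G) ≤ k`: every finite minimal bond-cutset between two vertices is
`k`-connected. -/
def edgeCutConnStarLe {V : Type} (G : SimpleGraph V) (k : ℕ) : Prop :=
  ∀ u v : V, ∀ A : Set (Sym2 V), A.Finite → IsMinBondCutset G A u v →
    edgeKConnectedSet G k A

/-- Reachability inside a set `S` of vertices. -/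
def reachIn {V : Type} (G : SimpleGraph V) (S : Set V) : V → V → Prop :=
  Relation.ReflTransGen fun a b => a ∈ S ∧ b ∈ S ∧ G.Adj a b

/-- There is a path from `x` to `y` all of whose vertices lie in `S`. -/
def pathIn {V : Type} (G : SimpleGraph V) (S : Set V) (x y : V) : Prop :=
  x ∈ S ∧ reachIn G S x y

/-- The connected component of `u` of the subgraph induced on `S`. -/
def compIn {V : Type} (G : SimpleGraph V) (S : Set V) (u : V) : Set V :=
  {v | pathIn G S u v}

/-- `G` is one-ended: for every finite set `F` of vertices, the complement of
`F` has exactly one infinite connected component. -/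
def OneEnded {V : Type} (G : SimpleGraph V) : Prop :=
  ∀ F : Set V, F.Finite →
    ∃ u, u ∉ F ∧ (compIn G Fᶜ u).Infinite ∧
      ∀ v, v ∉ F → (compIn G Fᶜ v).Infinite → pathIn G Fᶜ u v

/-- The outer vertex boundary `∂_V A`: vertices not in `A` adjacent to `A`. -/
def vertexBoundary {V : Type} (G : SimpleGraph V) (A : Set V) : Set V :=
  {v | v ∉ A ∧ ∃ u ∈ A, G.Adj u v}

/-- A fibration: a 1-Lipschitz map along which every edge at the image of `x`
lifts to an edge at `x`. -/
def IsFibration {V W : Type} (GrL : SimpleGraph V) (GrS : SimpleGraph W)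
    (pr : V → W) : Prop :=
  (∀ x y : V, GrS.dist (pr x) (pr y) ≤ GrL.dist x y) ∧
  (∀ (x : V) (v : W), GrS.Adj (pr x) v → ∃ y : V, GrL.Adj x y ∧ pr y = v)

/-- `φ` is an `A`-quasi-isometry. -/
def IsQI {V W : Type} (A : ℝ) (G : SimpleGraph V) (H : SimpleGraph W)
    (φ : V → W) : Prop :=
  (∀ x y : V, (1 / A) * (G.dist x y : ℝ) - A ≤ (H.dist (φ x) (φ y) : ℝ) ∧
      (H.dist (φ x) (φ y) : ℝ) ≤ A * (G.dist x y : ℝ) + A) ∧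
  (∀ z : W, ∃ x : V, (H.dist z (φ x) : ℝ) ≤ A)

/-- `G` and `H` are `A`-quasi-isometric (with `A`-quasi-inverse maps). -/
def QuasiIsometric {V W : Type} (A : ℝ) (G : SimpleGraph V) (H : SimpleGraph W) : Prop :=
  ∃ (φ : V → W) (ψ : W → V), IsQI A G H φ ∧ IsQI A H G ψ ∧
    (∀ x : V, (G.dist (ψ (φ x)) x : ℝ) ≤ A) ∧
    (∀ z : W, (H.dist (φ (ψ z)) z : ℝ) ≤ A)

/-! ### Balls, transitivity, the class `𝔊`, and the local topology -/

/-- The ball of radius `r` around `o`. -/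
def ball (Γ : SpaceGraph) (o : Γ.V) (r : ℕ) : Set Γ.V := {v | Γ.G.dist o v ≤ r}

/-- The sphere of radius `r` around `o`. -/
def sphere (Γ : SpaceGraph) (o : Γ.V) (r : ℕ) : Set Γ.V := {v | Γ.G.dist o v = r}

/-- `Γ` is (vertex-)transitive. -/
def IsTransitive (Γ : SpaceGraph) : Prop :=
  ∀ u v : Γ.V, ∃ φ : Γ.G ≃g Γ.G, φ u = v

/-- Membership in the class `𝔊`: transitive, superlinear growth, and
polynomial growth. -/
def InPolyClass (Γ : SpaceGraph) : Prop :=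
  IsTransitive Γ ∧
  (∀ (o : Γ.V) (K : ℕ), ∃ R : ℕ, ∀ r : ℕ, R ≤ r → K * r ≤ (ball Γ o r).ncard) ∧
  (∃ C d : ℕ, ∀ (o : Γ.V) (r : ℕ), 1 ≤ r → (ball Γ o r).ncard ≤ C * r ^ d)

lemma self_mem_ball (Γ : SpaceGraph) (o : Γ.V) (r : ℕ) : o ∈ ball Γ o r := by
  simp [ball, SimpleGraph.dist_self]

/-- The rooted balls of radius `r` in `Γ` (around `o`) and `Δ` (around `o'`)
are isomorphic, by an isomorphism matching the roots. -/
def rootedBallIso (Γ Δ : SpaceGraph) (o : Γ.V) (o' : Δ.V) (r : ℕ) : Prop :=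
  ∃ φ : Γ.G.induce (ball Γ o r) ≃g Δ.G.induce (ball Δ o' r),
    φ ⟨o, self_mem_ball Γ o r⟩ = ⟨o', self_mem_ball Δ o' r⟩

/-- `R(Γ,Δ) ≥ r`: the `r`-balls of `Γ` and `Δ` are isomorphic as rooted graphs. -/
def RGe (Γ Δ : SpaceGraph) (r : ℕ) : Prop :=
  ∃ (o : Γ.V) (o' : Δ.V), rootedBallIso Γ Δ o o' r

/-! ### Bernoulli percolation -/

/-- The probability of the event `A` under Bernoulli(`p`) bond percolation on `Γ`.
(Configurations assign a state to every element of `Sym2 Γ.V`; only the states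
of actual edges matter for the events considered.) -/
noncomputable def prob (Γ : SpaceGraph) (p : ℝ) (A : Set (Sym2 Γ.V → Bool)) : ℝ :=
  (bernoulliProd (Sym2 Γ.V) p A).toReal

/-- The probability of the event `A`, as an extended nonnegative real. -/
noncomputable def probNN (Γ : SpaceGraph) (p : ℝ) (A : Set (Sym2 Γ.V → Bool)) : ℝ≥0∞ :=
  bernoulliProd (Sym2 Γ.V) p A

/-- `u` and `v` are adjacent and the edge between them is open in `ω`. -/
def openAdj (Γ : SpaceGraph) (ω : Sym2 Γ.V → Bool) (u v : Γ.V) : Prop :=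
  Γ.G.Adj u v ∧ ω s(u, v) = true

/-- `u` and `v` are connected by an open path in `ω`. -/
def Conn (Γ : SpaceGraph) (ω : Sym2 Γ.V → Bool) (u v : Γ.V) : Prop :=
  Relation.ReflTransGen (openAdj Γ ω) u v

/-- The (open) cluster of `u` in `ω`. -/
def cluster (Γ : SpaceGraph) (ω : Sym2 Γ.V → Bool) (u : Γ.V) : Set Γ.V :=
  {v | Conn Γ ω u v}

/-- `θ_Γ(p)` with root `o` (independent of `o` for transitive graphs). -/
noncomputable def theta (Γ : SpaceGraph) (o : Γ.V) (p : ℝ) : ℝ :=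
  prob Γ p {ω | (cluster Γ ω o).Infinite}

/-- The critical parameter `p_c(Γ)` (with root `o`). -/
noncomputable def pc (Γ : SpaceGraph) (o : Γ.V) : ℝ :=
  sInf ({1} ∪ {p : ℝ | p ∈ Set.Icc (0 : ℝ) 1 ∧ 0 < theta Γ o p})


/-! ### Good and bad vertices, interfaces -/

/-- Open connectivity using only vertices of `S`. -/
def ConnIn (Γ : SpaceGraph) (ω : Sym2 Γ.V → Bool) (S : Set Γ.V) (u v : Γ.V) : Prop :=
  Relation.ReflTransGen (fun a b => a ∈ S ∧ b ∈ S ∧ openAdj Γ ω a b) u v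

/-- The uniqueness event `U(m,n,x)`: at most one cluster of `ω` restricted to
`B(x,n)` intersects both `B(x,m)` and `S(x,n)`. -/
def UEvent (Γ : SpaceGraph) (ω : Sym2 Γ.V → Bool) (m n : ℕ) (x : Γ.V) : Prop :=
  ∀ a b a' b' : Γ.V, a ∈ ball Γ x m → b ∈ sphere Γ x n →
    a' ∈ ball Γ x m → b' ∈ sphere Γ x n →
    ConnIn Γ ω (ball Γ x n) a b → ConnIn Γ ω (ball Γ x n) a' b' →
    ConnIn Γ ω (ball Γ x n) a a'

/-- `x` is `N`-good in `ω`. -/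
def NGood (Γ : SpaceGraph) (ω : Sym2 Γ.V → Bool) (N : ℕ) (x : Γ.V) : Prop :=
  ∀ z : Γ.V, (z = x ∨ Γ.G.Adj x z) →
    (∃ a ∈ ball Γ z N, ∃ b ∈ sphere Γ z (10 * N), Conn Γ ω a b) ∧
      UEvent Γ ω (2 * N) (5 * N) z

/-- `x` is `N`-bad in `ω`. -/
def NBad (Γ : SpaceGraph) (ω : Sym2 Γ.V → Bool) (N : ℕ) (x : Γ.V) : Prop :=
  ¬NGood Γ ω N x

/-- `C_x^bad(N)`: the `t`-connected component of `x` within the `N`-bad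
vertices (empty if `x` is `N`-good). -/
def badComp (Γ : SpaceGraph) (ω : Sym2 Γ.V → Bool) (N t : ℕ) (x : Γ.V) : Set Γ.V :=
  {y | NBad Γ ω N x ∧
    Relation.ReflTransGen (fun a b => NBad Γ ω N a ∧ NBad Γ ω N b ∧ kAdj Γ.G t a b) x y}

/-- `C_o(N)`: the set of vertices within distance `N` of the cluster of `o`. -/
def clusterNbhd (Γ : SpaceGraph) (ω : Sym2 Γ.V → Bool) (o : Γ.V) (N : ℕ) : Set Γ.V :=
  {v | ∃ u ∈ cluster Γ ω o, Γ.G.dist v u ≤ N}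

/-- The exposed boundary `∂A`: vertices of `A` adjacent to an infinite
connected component of the complement of `A`. -/
def exposedBoundary (Γ : SpaceGraph) (A : Set Γ.V) : Set Γ.V :=
  {v | v ∈ A ∧ ∃ w, w ∉ A ∧ Γ.G.Adj v w ∧ (compIn Γ.G Aᶜ w).Infinite}

/-- An interface (relative to the root `o` and the connectivity constant `t`):
a finite `t`-connected set of vertices containing `o` or surrounding `o`. -/
def IsInterface (Γ : SpaceGraph) (o : Γ.V) (t : ℕ) (I : Finset Γ.V) : Prop :=
  kConnectedSet Γ.G t (↑I : Set Γ.V) ∧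
    (o ∈ I ∨ (o ∉ I ∧ (compIn Γ.G ((↑I : Set Γ.V))ᶜ o).Finite))

/-- The set of vertices within distance `r` of `I`. -/
def interfaceNbhd (Γ : SpaceGraph) (I : Finset Γ.V) (r : ℕ) : Set Γ.V :=
  {v | ∃ y ∈ I, Γ.G.dist v y ≤ r}

/-- The interface `I` occurs in `ω` at scale `N`: all its vertices are `N`-bad,
all vertices at distance between `1` and `t` from it are `N`-good, and the
closed edges with both endpoints within distance `5N` of `I` form a
bond-cutset between `o` and infinity. -/
def InterfaceOccurs (Γ : SpaceGraph) (o : Γ.V) (t N : ℕ) (ω : Sym2 Γ.V → Bool)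
    (I : Finset Γ.V) : Prop :=
  (∀ x ∈ I, NBad Γ ω N x) ∧
  (∀ x : Γ.V, x ∉ I → (∃ y ∈ I, Γ.G.dist x y ≤ t) → NGood Γ ω N x) ∧
  (∀ f : ℕ → Γ.V, f 0 = o → Function.Injective f →
    (∀ n : ℕ, Γ.G.Adj (f n) (f (n + 1))) →
    ∃ n : ℕ, ω s(f n, f (n + 1)) = false ∧
      f n ∈ interfaceNbhd Γ I (5 * N) ∧ f (n + 1) ∈ interfaceNbhd Γ I (5 * N))

/-- A multi-interface: a finite nonempty collection of pairwise disjoint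
interfaces. -/
def IsMultiInterface (Γ : SpaceGraph) (o : Γ.V) (t : ℕ)
    (M : Finset (Finset Γ.V)) : Prop :=
  M.Nonempty ∧ (∀ I ∈ M, IsInterface Γ o t I) ∧
    ∀ I ∈ M, ∀ J ∈ M, I ≠ J → Disjoint I J

/-- The size of a multi-interface. -/
def multiSize {α : Type} (M : Finset (Finset α)) : ℕ := ∑ I ∈ M, I.card

/-- The multi-interface `M` occurs in `ω` at scale `N`. -/
def MultiOccurs (Γ : SpaceGraph) (o : Γ.V) (t N : ℕ) (ω : Sym2 Γ.V → Bool)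
    (M : Finset (Finset Γ.V)) : Prop :=
  ∀ I ∈ M, InterfaceOccurs Γ o t N ω I

/-! ### Growth degree and dimension -/

/-- `Γ` has growth of degree at most `d`. -/
def growthLe (Γ : SpaceGraph) (d : ℕ) : Prop :=
  ∃ C : ℕ, ∀ (o : Γ.V) (r : ℕ), 1 ≤ r → (ball Γ o r).ncard ≤ C * r ^ d

/-- The dimension of a graph of polynomial growth: the least degree `d` of a
polynomial upper bound on the growth. -/
noncomputable def dimen (Γ : SpaceGraph) : ℕ := sInf {d | growthLe Γ d}

/-! ### Cayley graphs and products of cycle-graphs -/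

/-- The Cayley graph of a group `K` with respect to a (symmetrized) set `T`. -/
def cayley (K : Type) [Group K] (T : Set K) : SimpleGraph K where
  Adj g h := g ≠ h ∧ (g⁻¹ * h ∈ T ∨ h⁻¹ * g ∈ T)
  symm := ⟨by
    rintro g h ⟨hgh, hmem⟩
    exact ⟨hgh.symm, hmem.symm⟩⟩
  loopless := ⟨fun g h => h.1 rfl⟩

/-- A finitely generated group is one-ended if all of its Cayley graphs with
respect to finite generating sets are one-ended. -/
def GroupOneEnded (K : Type) [Group K] : Prop :=
  ∀ T : Set K, T.Finite → Subgroup.closure T = ⊤ → OneEnded (cayley K T)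

/-- The box product of a finite family of graphs. -/
def boxProd {m : ℕ} (Vf : Fin m → Type) (Gf : ∀ i, SimpleGraph (Vf i)) :
    SimpleGraph (∀ i, Vf i) where
  Adj a b := ∃ i, (Gf i).Adj (a i) (b i) ∧ ∀ j, j ≠ i → a j = b j
  symm := ⟨by
    rintro a b ⟨i, hadj, h⟩
    exact ⟨i, hadj.symm, fun j hj => (h j hj).symm⟩⟩
  loopless := ⟨by
    rintro a ⟨i, hadj, -⟩
    exact (Gf i).loopless.irrefl _ hadj⟩

/-- Membership in the class `𝔄`: products of finitely many cycle-graphs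
(connected graphs in which every vertex has degree 2), at least two of which
are infinite. -/
def InA (Γ : SpaceGraph) : Prop :=
  ∃ (m : ℕ) (Vf : Fin m → Type) (Gf : ∀ i, SimpleGraph (Vf i)),
    (∀ i, (Gf i).Connected) ∧
    (∀ (i : Fin m) (v : Vf i), ((Gf i).neighborSet v).ncard = 2) ∧
    (∃ i j : Fin m, i ≠ j ∧ Infinite (Vf i) ∧ Infinite (Vf j)) ∧
    Nonempty (Γ.G ≃g boxProd Vf Gf)



/-! ### Auxiliary development for Statement 9 -/

section Fibration

open Relation SimpleGraph

variable {V W : Type}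

/-- Reachability avoiding a set of edges. -/
def eReach (G : SimpleGraph V) (A : Set (Sym2 V)) : V → V → Prop :=
  Relation.ReflTransGen (fun a b => G.Adj a b ∧ s(a, b) ∉ A)

lemma eReach_refl {G : SimpleGraph V} {A : Set (Sym2 V)} (x : V) : eReach G A x x :=
  Relation.ReflTransGen.refl

lemma eReach_trans {G : SimpleGraph V} {A : Set (Sym2 V)} {x y z : V}
    (h1 : eReach G A x y) (h2 : eReach G A y z) : eReach G A x z :=
  Relation.ReflTransGen.trans h1 h2

lemma eReach_symm {G : SimpleGraph V} {A : Set (Sym2 V)} {x y : V}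
    (h : eReach G A x y) : eReach G A y x := by
  refine (@Relation.ReflTransGen.symmetric _ (fun a b => G.Adj a b ∧ s(a, b) ∉ A) ⟨?_⟩).symm _ _ h
  rintro a b ⟨hadj, hA⟩
  refine ⟨hadj.symm, ?_⟩
  rwa [Sym2.eq_swap]

lemma eReach_exists_walk {G : SimpleGraph V} {A : Set (Sym2 V)} {x y : V}
    (h : eReach G A x y) : ∃ w : G.Walk x y, ∀ e ∈ w.edges, e ∉ A := by
  induction h with
  | refl => exact ⟨SimpleGraph.Walk.nil, by simp⟩
  | tail _ hstep ih =>
    obtain ⟨w, hw⟩ := ih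
    refine ⟨w.concat hstep.1, ?_⟩
    intro e he
    simp only [SimpleGraph.Walk.edges_concat, List.concat_eq_append, List.mem_append,
      List.mem_singleton] at he
    rcases he with he | he
    · exact hw e he
    · rw [he]; exact hstep.2

lemma walk_eReach {G : SimpleGraph V} {A : Set (Sym2 V)} {x y : V}
    (w : G.Walk x y) (hw : ∀ e ∈ w.edges, e ∉ A) : eReach G A x y := by
  induction w with
  | nil => exact eReach_refl _
  | cons h p ih =>
    refine Relation.ReflTransGen.head ⟨h, hw _ (by simp)⟩ (ih ?_)
    intro e he
    exact hw e (by simp [he])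

lemma rtg_map {α β : Type*} {r : α → α → Prop} {r' : β → β → Prop} (g : α → β)
    (h : ∀ a b, r a b → Relation.ReflTransGen r' (g a) (g b)) {x y : α}
    (hxy : Relation.ReflTransGen r x y) : Relation.ReflTransGen r' (g x) (g y) := by
  induction hxy with
  | refl => exact Relation.ReflTransGen.refl
  | tail _ hstep ih => exact ih.trans (h _ _ hstep)

lemma crossing_edge {G : SimpleGraph V} (C : Set V) :
    ∀ {x y : V} (w : G.Walk x y), x ∈ C → y ∉ C →
      ∃ a b, G.Adj a b ∧ a ∈ C ∧ b ∉ C ∧ s(a, b) ∈ w.edges := by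
  intro x y w
  induction w with
  | nil => intro hx hy; exact absurd hx hy
  | @cons x c y hadj p ih =>
    intro hx hy
    by_cases hc : c ∈ C
    · obtain ⟨a, b, h1, h2, h3, h4⟩ := ih hc hy
      exact ⟨a, b, h1, h2, h3, by simp [h4]⟩
    · exact ⟨x, c, hadj, hx, hc, by simp⟩

lemma isBondCutset_symm {G : SimpleGraph V} {A : Set (Sym2 V)} {u v : V}
    (h : IsBondCutset G A u v) : IsBondCutset G A v u := by
  refine ⟨h.1, fun w => ?_⟩
  obtain ⟨e, he, heA⟩ := h.2 w.reverse
  rw [SimpleGraph.Walk.edges_reverse, List.mem_reverse] at he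
  exact ⟨e, he, heA⟩

lemma isMinBondCutset_symm {G : SimpleGraph V} {A : Set (Sym2 V)} {u v : V}
    (h : IsMinBondCutset G A u v) : IsMinBondCutset G A v u :=
  ⟨isBondCutset_symm h.1, fun B hB hB' => h.2 B hB (isBondCutset_symm hB')⟩

lemma cutset_not_eReach {G : SimpleGraph V} {A : Set (Sym2 V)} {u v : V}
    (h : IsBondCutset G A u v) : ¬ eReach G A u v := by
  intro hr
  obtain ⟨w, hw⟩ := eReach_exists_walk hr
  obtain ⟨e, he, heA⟩ := h.2 w
  exact hw e he heA

/-- Key structural fact: for a minimal bond-cutset `A` between `u` and `v`, every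
edge of `A` has one endpoint reachable from `u` and the other from `v` (avoiding `A`). -/
lemma endpoints_split {G : SimpleGraph V} {A : Set (Sym2 V)} {u v : V}
    (hmin : IsMinBondCutset G A u v) {s t : V} (hst : s(s, t) ∈ A) :
    (eReach G A u s ∧ eReach G A v t) ∨ (eReach G A u t ∧ eReach G A v s) := by
  have huv : ¬ eReach G A u v := cutset_not_eReach hmin.1
  have hproper : A \ {s(s, t)} ⊂ A := Set.sdiff_singleton_ssubset.mpr hst
  have hnc := hmin.2 _ hproper
  have hsub : A \ {s(s, t)} ⊆ G.edgeSet := Set.diff_subset.trans hmin.1.1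
  have hex : ∃ w : G.Walk u v, ∀ e ∈ w.edges, e ∉ A \ {s(s, t)} := by
    by_contra hcon
    push_neg at hcon
    exact hnc ⟨hsub, fun w => by
      obtain ⟨e, he, heA⟩ := hcon w
      exact ⟨e, he, heA⟩⟩
  obtain ⟨w, hw⟩ := hex
  have key : ∀ z₀ z : V, eReach G (A \ {s(s, t)}) z₀ z →
      eReach G A z₀ z ∨ eReach G A s z ∨ eReach G A t z := by
    intro z₀ z h
    induction h with
    | refl => exact Or.inl (eReach_refl _)
    | @tail b c _ hstep ih =>
      obtain ⟨hadj, hne⟩ := hstep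
      by_cases hmem : s(b, c) ∈ A
      · have heq : s(b, c) = s(s, t) := by
          by_contra hq
          exact hne ⟨hmem, hq⟩
        rcases Sym2.eq_iff.mp heq with ⟨rfl, rfl⟩ | ⟨rfl, rfl⟩
        · exact Or.inr (Or.inr (eReach_refl _))
        · exact Or.inr (Or.inl (eReach_refl _))
      · rcases ih with h | h | h
        · exact Or.inl (h.tail ⟨hadj, hmem⟩)
        · exact Or.inr (Or.inl (h.tail ⟨hadj, hmem⟩))
        · exact Or.inr (Or.inr (h.tail ⟨hadj, hmem⟩))
  have hre : eReach G (A \ {s(s, t)}) u v := walk_eReach w hw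
  have h1 : eReach G A s v ∨ eReach G A t v := by
    rcases key u v hre with h | h | h
    · exact absurd h huv
    · exact Or.inl h
    · exact Or.inr h
  have h2 : eReach G A s u ∨ eReach G A t u := by
    rcases key v u (eReach_symm hre) with h | h | h
    · exact absurd (eReach_symm h) huv
    · exact Or.inl h
    · exact Or.inr h
  rcases h2 with h2 | h2 <;> rcases h1 with h1 | h1
  · exact absurd (eReach_trans (eReach_symm h2) h1) huv
  · exact Or.inl ⟨eReach_symm h2, eReach_symm h1⟩
  · exact Or.inr ⟨eReach_symm h2, eReach_symm h1⟩
  · exact absurd (eReach_trans (eReach_symm h2) h1) huv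

/-- For a minimal bond-cutset, every vertex is reachable from `u` or from `v`
avoiding the cutset. -/
lemma vertex_split {G : SimpleGraph V} {A : Set (Sym2 V)} {u v : V}
    (hconn : G.Connected) (hmin : IsMinBondCutset G A u v) (z : V) :
    eReach G A u z ∨ eReach G A v z := by
  have hr : Relation.ReflTransGen G.Adj u z :=
    (SimpleGraph.reachable_iff_reflTransGen u z).mp (hconn.preconnected u z)
  induction hr with
  | refl => exact Or.inl (eReach_refl _)
  | @tail b c _ hadj ih =>
    by_cases hmem : s(b, c) ∈ A
    · rcases endpoints_split hmin hmem with ⟨_, hvc⟩ | ⟨huc, _⟩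
      · exact Or.inr hvc
      · exact Or.inl huc
    · rcases ih with h | h
      · exact Or.inl (h.tail ⟨hadj, hmem⟩)
      · exact Or.inr (h.tail ⟨hadj, hmem⟩)

variable {GrL : SimpleGraph V} {GrS : SimpleGraph W} {pr : V → W}

lemma adj_proj (hSconn : GrS.Connected) (hfib : IsFibration GrL GrS pr)
    {x y : V} (h : GrL.Adj x y) : pr x = pr y ∨ GrS.Adj (pr x) (pr y) := by
  have h2 : GrL.dist x y ≤ 1 := by
    have := SimpleGraph.dist_le (SimpleGraph.Walk.cons h SimpleGraph.Walk.nil)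
    simpa using this
  have h3 : GrS.dist (pr x) (pr y) ≤ 1 := le_trans (hfib.1 x y) h2
  rcases Nat.le_one_iff_eq_zero_or_eq_one.mp h3 with h0 | h1
  · exact Or.inl (hSconn.dist_eq_zero_iff.mp h0)
  · exact Or.inr (SimpleGraph.dist_eq_one_iff_adj.mp h1)

lemma lift_walk (hfib : IsFibration GrL GrS pr) :
    ∀ {a b : W} (wS : GrS.Walk a b) (x : V), pr x = a →
      ∃ (y : V) (wL : GrL.Walk x y), pr y = b ∧
        ∀ e ∈ wL.edges, Sym2.map pr e ∈ wS.edges := by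
  intro a b wS
  induction wS with
  | nil => intro x hx; exact ⟨x, SimpleGraph.Walk.nil, hx, by simp⟩
  | @cons a c b hadj p ih =>
    intro x hx
    obtain ⟨x₁, hadjL, hx₁⟩ := hfib.2 x c (hx ▸ hadj)
    obtain ⟨y, wL, hy, hw⟩ := ih x₁ hx₁
    refine ⟨y, SimpleGraph.Walk.cons hadjL wL, hy, ?_⟩
    intro e he
    rw [SimpleGraph.Walk.edges_cons, List.mem_cons] at he
    rw [SimpleGraph.Walk.edges_cons]
    rcases he with rfl | he
    · rw [Sym2.map_pair_eq, hx, hx₁]; exact List.mem_cons_self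
    · exact List.mem_cons_of_mem _ (hw e he)

lemma eReach_proj (hSconn : GrS.Connected) (hfib : IsFibration GrL GrS pr)
    {A : Set (Sym2 W)} {x y : V}
    (h : eReach GrL (Sym2.map pr ⁻¹' A) x y) : eReach GrS A (pr x) (pr y) := by
  refine rtg_map pr ?_ h
  rintro a b ⟨hadj, hA⟩
  rcases adj_proj hSconn hfib hadj with heq | hadjS
  · rw [heq]
  · refine Relation.ReflTransGen.single ⟨hadjS, ?_⟩
    intro hmem
    exact hA (by simpa [Sym2.map_pair_eq] using hmem)

end Fibration

lemma main_aux {V W : Type} (GrL : SimpleGraph V) (GrS : SimpleGraph W)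
    (hneL : Nonempty V)
    (hLconn : GrL.Connected) (hSconn : GrS.Connected)
    (pr : V → W) (hfib : IsFibration GrL GrS pr)
    (hpre : ∀ F : Set W, F.Finite → ∀ u : W, u ∉ F → (compIn GrS Fᶜ u).Infinite →
      ∀ x y : V, x ∈ pr ⁻¹' (compIn GrS Fᶜ u) → y ∈ pr ⁻¹' (compIn GrS Fᶜ u) →
        pathIn GrL (pr ⁻¹' (compIn GrS Fᶜ u)) x y)
    (k : ℕ) (hL : edgeCutConnLe GrL k)
    (u v : W) (A : Set (Sym2 W)) (hA : A.Finite) (hmin : IsMinBondCutset GrS A u v)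
    (κ : W) (hκF : κ ∉ {w | ∃ e ∈ A, w ∈ e})
    (hκinf : (compIn GrS ({w : W | ∃ e ∈ A, w ∈ e})ᶜ κ).Infinite)
    (hκv : eReach GrS A v κ) :
    edgeKConnectedSet GrS k A := by
  classical
  set F : Set W := {w | ∃ e ∈ A, w ∈ e} with hFdef
  have hAedge : A ⊆ GrS.edgeSet := hmin.1.1
  have hF : F.Finite := by
    have heq : F = ⋃ e ∈ A, {w | w ∈ e} := by
      ext w; simp [hFdef]
    rw [heq]
    refine hA.biUnion fun e _ => ?_
    induction e using Sym2.ind with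
    | _ a b =>
      refine Set.Finite.subset ((Set.finite_singleton b).insert a) ?_
      intro w hw
      rcases Sym2.mem_iff.mp hw with rfl | rfl <;> simp
  -- notation
  set A' : Set (Sym2 V) := Sym2.map pr ⁻¹' A with hA'def
  set K : Set W := compIn GrS Fᶜ κ with hKdef
  have hκK : κ ∈ K := ⟨hκF, Relation.ReflTransGen.refl⟩
  have hKF : ∀ w' ∈ K, w' ∉ F := by
    intro w' hw'
    obtain ⟨hκ, hr⟩ := hw'
    rcases Relation.ReflTransGen.cases_tail hr with heq | ⟨b, _, hstep⟩
    · rw [← heq] at hκ; exact hκ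
    · exact hstep.2.1
  have huv : ¬ eReach GrS A u v := cutset_not_eReach hmin.1
  -- surjectivity of pr
  have hsurj : ∀ w : W, ∃ x : V, pr x = w := by
    intro w
    obtain ⟨x₀⟩ := hneL
    obtain ⟨wS⟩ := hSconn.preconnected (pr x₀) w
    obtain ⟨y, _, hy, _⟩ := lift_walk hfib wS x₀ rfl
    exact ⟨y, hy⟩
  obtain ⟨x, hx⟩ := hsurj u
  obtain ⟨ystar, hystar⟩ := hsurj κ
  set C : Set V := {z | eReach GrL A' x z} with hCdef
  have hxC : x ∈ C := eReach_refl _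
  have hCu : ∀ z ∈ C, eReach GrS A u (pr z) := by
    intro z hz
    have := eReach_proj hSconn hfib (A := A) hz
    rwa [hx] at this
  have hCnotv : ∀ z ∈ C, ¬ eReach GrS A v (pr z) := by
    intro z hz hv
    exact huv (eReach_trans (hCu z hz) (eReach_symm hv))
  -- the preimage of K is eReach-connected in 𝓛 avoiding A'
  have hKpre : ∀ z z' : V, pr z ∈ K → pr z' ∈ K → eReach GrL A' z z' := by
    intro z z' hz hz'
    have hp := hpre F hF κ hκF hκinf z z' hz hz'
    refine Relation.ReflTransGen.mono ?_ _ _ hp.2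
    rintro a b ⟨haK, hbK, hadj⟩
    refine ⟨hadj, ?_⟩
    intro hmem
    have : s(pr a, pr b) ∈ A := by simpa [hA'def, Sym2.map_pair_eq] using hmem
    exact hKF (pr a) haK ⟨s(pr a, pr b), this, Sym2.mem_mk_left _ _⟩
  -- every vertex over the v-side is eReach-connected to ystar
  have hCK : ∀ z : V, eReach GrS A v (pr z) → eReach GrL A' ystar z := by
    intro z hz
    have hzκ : eReach GrS A (pr z) κ := eReach_trans (eReach_symm hz) hκv
    obtain ⟨wS, hwS⟩ := eReach_exists_walk hzκ
    obtain ⟨z'', wL, hz'', hwL⟩ := lift_walk hfib wS z rfl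
    have hzz'' : eReach GrL A' z z'' := by
      refine walk_eReach wL ?_
      intro e he hmem
      exact hwS _ (hwL e he) hmem
    have h1 : eReach GrL A' ystar z'' :=
      hKpre ystar z'' (by rw [hystar]; exact hκK) (by rw [hz'']; exact hκK)
    exact eReach_trans h1 (eReach_symm hzz'')
  -- the boundary cutset
  set Pi : Set (Sym2 V) := {e | ∃ a b, e = s(a, b) ∧ GrL.Adj a b ∧ a ∈ C ∧ b ∉ C}
    with hPidef
  have hPiA' : Pi ⊆ A' := by
    rintro e ⟨a, b, rfl, hadj, haC, hbC⟩
    by_contra hmem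
    exact hbC (haC.tail ⟨hadj, hmem⟩)
  have hPiedge : Pi ⊆ GrL.edgeSet := by
    rintro e ⟨a, b, rfl, hadj, _, _⟩
    exact hadj
  have hOuter : ∀ a b : V, GrL.Adj a b → a ∈ C → b ∉ C → eReach GrS A v (pr b) := by
    intro a b hadj haC hbC
    have hmemA : s(pr a, pr b) ∈ A := by
      have : s(a, b) ∈ A' := hPiA' ⟨a, b, rfl, hadj, haC, hbC⟩
      simpa [hA'def, Sym2.map_pair_eq] using this
    rcases endpoints_split hmin hmemA with ⟨_, hvt⟩ | ⟨_, hvs⟩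
    · exact hvt
    · exact absurd hvs (hCnotv a haC)
  have hystarC : ystar ∉ C := by
    intro h
    exact hCnotv ystar h (by rw [hystar]; exact hκv)
  have hcut : IsBondCutset GrL Pi x ystar := by
    refine ⟨hPiedge, fun w => ?_⟩
    obtain ⟨a, b, hadj, haC, hbC, he⟩ := crossing_edge C w hxC hystarC
    exact ⟨s(a, b), he, ⟨a, b, rfl, hadj, haC, hbC⟩⟩
  have hmin' : IsMinBondCutset GrL Pi x ystar := by
    refine ⟨hcut, ?_⟩
    intro B hB hBcut
    obtain ⟨e', he'Pi, he'B⟩ := Set.exists_of_ssubset hB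
    obtain ⟨a, b, rfl, hadj, haC, hbC⟩ := he'Pi
    have hbv : eReach GrS A v (pr b) := hOuter a b hadj haC hbC
    have hby : eReach GrL A' b ystar := eReach_symm (hCK b hbv)
    obtain ⟨w1, hw1⟩ := eReach_exists_walk haC
    obtain ⟨w2, hw2⟩ := eReach_exists_walk hby
    have hBA' : B ⊆ A' := (subset_of_ssubset hB).trans hPiA'
    obtain ⟨e, he, heB⟩ := hBcut.2 (w1.append (SimpleGraph.Walk.cons hadj w2))
    rw [SimpleGraph.Walk.edges_append, List.mem_append] at he
    rcases he with he | he
    · exact hw1 e he (hBA' heB)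
    · rw [SimpleGraph.Walk.edges_cons, List.mem_cons] at he
      rcases he with rfl | he
      · exact he'B heB
      · exact hw2 e he (hBA' heB)
  have hkconn : edgeKConnectedSet GrL k Pi := hL x ystar Pi hmin'
  -- surjectivity of Pi onto A
  have hsurjPi : ∀ e₀ ∈ A, ∃ e' ∈ Pi, Sym2.map pr e' = e₀ := by
    intro e₀ he₀
    have hproper : A \ {e₀} ⊂ A := Set.sdiff_singleton_ssubset.mpr he₀
    have hnc := hmin.2 _ hproper
    have hsub : A \ {e₀} ⊆ GrS.edgeSet := Set.diff_subset.trans hAedge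
    have hex : ∃ w : GrS.Walk u v, ∀ e ∈ w.edges, e ∉ A \ {e₀} := by
      by_contra hcon
      push_neg at hcon
      exact hnc ⟨hsub, fun w => by
        obtain ⟨e, he, heA⟩ := hcon w
        exact ⟨e, he, heA⟩⟩
    obtain ⟨w, hw⟩ := hex
    obtain ⟨y, wL, hy, hwL⟩ := lift_walk hfib w x hx
    have hyC : y ∉ C := by
      intro hyC
      refine hCnotv y hyC ?_
      rw [hy]
      exact eReach_refl _
    obtain ⟨a, b, hadj, haC, hbC, he⟩ := crossing_edge C wL hxC hyC
    refine ⟨s(a, b), ⟨a, b, rfl, hadj, haC, hbC⟩, ?_⟩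
    have hmemA : Sym2.map pr s(a, b) ∈ A := hPiA' ⟨a, b, rfl, hadj, haC, hbC⟩
    have hmemW : Sym2.map pr s(a, b) ∈ w.edges := hwL _ he
    have := hw _ hmemW
    by_contra hq
    exact this ⟨hmemA, hq⟩
  -- conclude
  intro e he f hf
  obtain ⟨ehat, hehatPi, hehat⟩ := hsurjPi e he
  obtain ⟨fhat, hfhatPi, hfhat⟩ := hsurjPi f hf
  have hchain := hkconn ehat hehatPi fhat hfhatPi
  have hmapped : Relation.ReflTransGen
      (fun a b => a ∈ A ∧ b ∈ A ∧ edgeKAdj GrS k a b)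
      (Sym2.map pr ehat) (Sym2.map pr fhat) := by
    refine rtg_map (Sym2.map pr) ?_ hchain
    rintro a b ⟨haPi, hbPi, hne, x₀, hx₀, y₀, hy₀, hd⟩
    by_cases hgeq : Sym2.map pr a = Sym2.map pr b
    · rw [hgeq]
    · refine Relation.ReflTransGen.single ?_
      refine ⟨by simpa [hA'def] using hPiA' haPi, by simpa [hA'def] using hPiA' hbPi,
        hgeq, pr x₀, Sym2.mem_map.mpr ⟨x₀, hx₀, rfl⟩, pr y₀,
        Sym2.mem_map.mpr ⟨y₀, hy₀, rfl⟩, le_trans (hfib.1 x₀ y₀) hd⟩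
  rw [hehat, hfhat] at hmapped
  exact hmapped

/-- Proposition: cutconnectivity and fibrations.
If `π : V(𝓛) → V(𝓢)` is a fibration, `𝓢` is one-ended, and for every finite
`F ⊆ V(𝓢)` the subgraph of `𝓛` induced on the preimage of the infinite
component of the complement of `F` is connected, then `C*_E(𝓢) ≤ C_E(𝓛)`. -/
theorem edgeCutConnStar_le_of_fibration
    {V W : Type} (GrL : SimpleGraph V) (GrS : SimpleGraph W)
    (hneL : Nonempty V) (hneS : Nonempty W)
    (hLconn : GrL.Connected) (hSconn : GrS.Connected)
    (hlfL : ∀ v : V, (GrL.neighborSet v).Finite)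
    (hlfS : ∀ w : W, (GrS.neighborSet w).Finite)
    (pr : V → W) (hfib : IsFibration GrL GrS pr)
    (hone : OneEnded GrS)
    (hpre : ∀ F : Set W, F.Finite → ∀ u : W, u ∉ F → (compIn GrS Fᶜ u).Infinite →
      ∀ x y : V, x ∈ pr ⁻¹' (compIn GrS Fᶜ u) → y ∈ pr ⁻¹' (compIn GrS Fᶜ u) →
        pathIn GrL (pr ⁻¹' (compIn GrS Fᶜ u)) x y) :
    ∀ k : ℕ, 1 ≤ k → edgeCutConnLe GrL k → edgeCutConnStarLe GrS k := by
  intro k hk hL u v A hA hmin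
  classical
  set F : Set W := {w | ∃ e ∈ A, w ∈ e} with hFdef
  have hF : F.Finite := by
    have heq : F = ⋃ e ∈ A, {w | w ∈ e} := by
      ext w; simp [hFdef]
    rw [heq]
    refine hA.biUnion fun e _ => ?_
    induction e using Sym2.ind with
    | _ a b =>
      refine Set.Finite.subset ((Set.finite_singleton b).insert a) ?_
      intro w hw
      rcases Sym2.mem_iff.mp hw with rfl | rfl <;> simp
  obtain ⟨u₀, hu₀F, hu₀inf, -⟩ := hone F hF
  rcases vertex_split hSconn hmin u₀ with hcase | hcase
  · exact main_aux GrL GrS hneL hLconn hSconn pr hfib hpre k hL v u A hA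
      (isMinBondCutset_symm hmin) u₀ hu₀F hu₀inf hcase
  · exact main_aux GrL GrS hneL hLconn hSconn pr hfib hpre k hL u v A hA
      hmin u₀ hu₀F hu₀inf hcase


end PercPaper
end

section
/- For all A, B ≥ 1 there exists C = C(A,B) ≥ 0 such that the following holds: if G and H are graphs that are A-quasi-isometric and C(G) ≤ B, then C(H) ≤ C. In other words, having all minimal cutsets between pairs of vertices k-connected for some finite k is a quasi-isometry invariant, with quantitative control of the constants (this answers Question 2 of Babson–Benjamini). -/
open MeasureTheory Set
open scoped ENNReal

namespace PercPaper

section QICutsetProof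

open SimpleGraph


open SimpleGraph

section Aux
variable {V : Type} {G : SimpleGraph V}




lemma dist_add_dist_le_length {u v x : V} (p : G.Walk u v) (hx : x ∈ p.support) :
    G.dist u x + G.dist x v ≤ p.length := by
  classical
  have h := congrArg SimpleGraph.Walk.length (p.take_spec hx)
  rw [SimpleGraph.Walk.length_append] at h
  have h1 := SimpleGraph.dist_le (p.takeUntil x hx)
  have h2 := SimpleGraph.dist_le (p.dropUntil x hx)
  omega

lemma dist_start_le_length {u v x : V} (p : G.Walk u v) (hx : x ∈ p.support) :
    G.dist u x ≤ p.length :=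
  le_trans (Nat.le_add_right _ _) (dist_add_dist_le_length p hx)

lemma dist_end_le_length {u v x : V} (p : G.Walk u v) (hx : x ∈ p.support) :
    G.dist x v ≤ p.length :=
  le_trans (Nat.le_add_left _ _) (dist_add_dist_le_length p hx)

lemma adj_dist_le_one {u v : V} (h : G.Adj u v) : G.dist u v ≤ 1 := by
  simpa using SimpleGraph.dist_le (SimpleGraph.Walk.cons h SimpleGraph.Walk.nil)

/-- Balls are finite in a connected locally finite graph. -/
lemma ball_finite (hG : G.Connected) (hlf : ∀ v : V, (G.neighborSet v).Finite)
    (x : V) : ∀ r : ℕ, {y : V | G.dist x y ≤ r}.Finite := by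
  intro r
  induction r with
  | zero =>
    have : {y : V | G.dist x y ≤ 0} ⊆ {x} := by
      intro y hy
      simp only [Set.mem_setOf_eq, Nat.le_zero] at hy
      have := (hG.dist_eq_zero_iff (u := x) (v := y)).mp hy
      simp [this.symm]
    exact Set.Finite.subset (Set.finite_singleton x) this
  | succ r ih =>
    have hsub : {y : V | G.dist x y ≤ r + 1} ⊆
        {y : V | G.dist x y ≤ r} ∪ ⋃ z ∈ {y : V | G.dist x y ≤ r}, G.neighborSet z := by
      intro y hy
      simp only [Set.mem_setOf_eq] at hy
      rcases Nat.lt_or_ge (G.dist x y) (r + 1) with h | h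
      · exact Or.inl (Nat.lt_succ_iff.mp h)
      · have heq : G.dist x y = r + 1 := le_antisymm hy h
        obtain ⟨p, hp⟩ := hG.exists_walk_length_eq_dist x y
        rw [heq] at hp
        -- decompose p from the end
        right
        cases hrev : p.reverse with
        | nil =>
          exfalso
          have := congrArg SimpleGraph.Walk.length hrev
          rw [SimpleGraph.Walk.length_reverse] at this
          simp [hp] at this
        | @cons _ z _ hadj q =>
          -- hadj : G.Adj y z, q : G.Walk z x
          have hq : G.dist x z ≤ r := by
            have := SimpleGraph.dist_le q.reverse
            have hlen : q.reverse.length = r := by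
              have := congrArg SimpleGraph.Walk.length hrev
              rw [SimpleGraph.Walk.length_reverse, hp] at this
              simp at this
              simp [SimpleGraph.Walk.length_reverse, this]
            omega
          refine Set.mem_biUnion hq ?_
          exact hadj.symm
    refine Set.Finite.subset (Set.Finite.union ih (Set.Finite.biUnion ih fun z _ => hlf z)) hsub






/-- `S` blocks all walks from `x` to `y` at distance `mu`. -/
def Blocks (G : SimpleGraph V) (x y : V) (mu : ℕ) (S : Set V) : Prop :=
  ∀ p : G.Walk x y, ∃ g ∈ p.support, ∃ σ ∈ S, G.dist g σ ≤ mu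

lemma exists_minimal_blocks (hG : G.Connected) (hlf : ∀ v : V, (G.neighborSet v).Finite)
    (x y : V) (mu : ℕ) (Amb : Set V) (hA : Blocks G x y mu Amb) :
    ∃ S ⊆ Amb, Blocks G x y mu S ∧ ∀ S' ⊂ S, ¬Blocks G x y mu S' := by
  have hz := zorn_superset_nonempty {S : Set V | S ⊆ Amb ∧ Blocks G x y mu S} ?_ Amb
    ⟨subset_rfl, hA⟩
  · obtain ⟨S, -, hS⟩ := hz
    refine ⟨S, hS.prop.1, hS.prop.2, ?_⟩
    intro S' hS' hBS'
    have := hS.2 (y := S') ⟨hS'.subset.trans hS.prop.1, hBS'⟩ hS'.subset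
    exact hS'.ne (le_antisymm this hS'.subset).symm
  · -- chains have lower bounds
    intro c hc hchain hne
    refine ⟨⋂₀ c, ⟨?_, ?_⟩, fun s hs => Set.sInter_subset_of_mem hs⟩
    · obtain ⟨S₀, hS₀⟩ := hne
      exact (Set.sInter_subset_of_mem hS₀).trans (hc hS₀).1
    · intro p
      classical
      -- the relevant finite set of potential blocker elements
      set K : Set V := {g : V | ∃ h ∈ p.support, G.dist h g ≤ mu} with hK
      have hKfin : K.Finite := by
        have : K ⊆ ⋃ h ∈ {h : V | h ∈ p.support}, {g : V | G.dist h g ≤ mu} := by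
          intro g hg
          obtain ⟨h, hh, hd⟩ := hg
          exact Set.mem_biUnion hh hd
        exact Set.Finite.subset
          (Set.Finite.biUnion (p.support.finite_toSet) fun h _ => ball_finite hG hlf h mu) this
      -- every member of the chain meets K
      have hmeet : ∀ S ∈ c, (S ∩ K).Nonempty := by
        intro S hS
        obtain ⟨g, hg, σ, hσ, hd⟩ := (hc hS).2 p
        exact ⟨σ, hσ, ⟨g, hg, hd⟩⟩
      -- the chain of intersections with K has a least element
      have hTfin : {T : Set V | ∃ S ∈ c, T = S ∩ K}.Finite := by
        have : {T : Set V | ∃ S ∈ c, T = S ∩ K} ⊆ 𝒫 K := by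
          rintro T ⟨S, -, rfl⟩; exact Set.inter_subset_right
        exact Set.Finite.subset hKfin.finite_subsets this
      obtain ⟨S₀, hS₀⟩ := hne
      have hTne : {T : Set V | ∃ S ∈ c, T = S ∩ K}.Nonempty := ⟨S₀ ∩ K, S₀, hS₀, rfl⟩
      obtain ⟨M, hM, hMmin⟩ : ∃ M ∈ {T : Set V | ∃ S ∈ c, T = S ∩ K},
          ∀ a' ∈ {T : Set V | ∃ S ∈ c, T = S ∩ K}, id a' ≤ id M → id M = id a' := by
        obtain ⟨M, hM, hMmin⟩ := hTfin.exists_minimal hTne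
        exact ⟨M, hM, fun a' ha' hle => le_antisymm (hMmin ha' hle) hle⟩
      obtain ⟨SM, hSM, rfl⟩ := hM
      have hMleast : ∀ S ∈ c, SM ∩ K ⊆ S ∩ K := by
        intro S hS
        rcases hchain.total hSM hS with h | h
        · exact Set.inter_subset_inter_left K h
        · have : S ∩ K ⊆ SM ∩ K := Set.inter_subset_inter_left K h
          have := hMmin (S ∩ K) ⟨S, hS, rfl⟩ this
          simp only [id] at this
          rw [this]
      obtain ⟨ζ, hζS, hζK⟩ := hmeet SM hSM
      obtain ⟨h, hh, hd⟩ := hζK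
      refine ⟨h, hh, ζ, ?_, hd⟩
      intro S hS
      exact (hMleast S hS ⟨hζS, ⟨h, hh, hd⟩⟩).1







/-- Follow a walk in another graph through a map with bounded steps:
there is a walk between the images all of whose vertices are within `k`
of the image of some vertex of the original walk. -/
lemma walk_follow {W : Type} {Y : SimpleGraph W} (hG : G.Connected) (f : W → V) (k : ℕ)
    (hstep : ∀ a b : W, Y.Adj a b → G.dist (f a) (f b) ≤ k) :
    ∀ {α β : W} (p : Y.Walk α β),
      ∃ q : G.Walk (f α) (f β), ∀ x ∈ q.support, ∃ w ∈ p.support, G.dist (f w) x ≤ k := by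
  intro α β p
  induction p with
  | nil =>
    refine ⟨SimpleGraph.Walk.nil, ?_⟩
    intro x hx
    simp only [SimpleGraph.Walk.support_nil, List.mem_singleton] at hx
    subst hx
    exact ⟨_, SimpleGraph.Walk.start_mem_support _, by rw [SimpleGraph.dist_self]; exact Nat.zero_le _⟩
  | cons hadj p ih =>
    rename_i w₁ w₂ w₃
    obtain ⟨q', hq'⟩ := ih
    obtain ⟨g, hg⟩ := hG.exists_walk_length_eq_dist (f w₁) (f w₂)
    refine ⟨g.append q', ?_⟩
    intro x hx
    rcases (SimpleGraph.Walk.mem_support_append_iff _ _).mp hx with h | h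
    · refine ⟨w₁, by simp, ?_⟩
      calc G.dist (f w₁) x ≤ g.length := dist_start_le_length g h
        _ = G.dist (f w₁) (f w₂) := hg
        _ ≤ k := hstep _ _ hadj
    · obtain ⟨w, hw, hd⟩ := hq' x h
      exact ⟨w, by simp [hw], hd⟩






/-- The extraction lemma: along a walk from a vertex near `S₂` to a vertex
near `S₁`, there is a "far" vertex, still anchored at `S₂`, from which the
rest of the walk stays far from `S₂`. -/
lemma extract (hG : G.Connected) (S₁ S₂ : Set V) (t D₀ : ℕ) (hD : D₀ ≤ t)
    (hgap : ∀ s₁ ∈ S₁, ∀ s₂ ∈ S₂, 2*t+2 ≤ G.dist s₁ s₂) :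
    ∀ (n : ℕ) (α β : V) (p : G.Walk α β), p.length ≤ n →
      (∃ s ∈ S₂, G.dist α s ≤ t) → (∃ s ∈ S₁, G.dist β s ≤ t) →
      ∃ (x : V) (q : G.Walk x β),
        (∀ v ∈ q.support, v ∈ p.support) ∧
        (∀ r, r ∈ S₁ ∪ S₂ → t < G.dist x r) ∧
        (∃ s ∈ S₂, G.dist x s ≤ t+1) ∧
        (∀ v ∈ q.support, ∀ s ∈ S₂, D₀ < G.dist v s) := by
  have nilcase : ∀ α : V, (∃ s ∈ S₂, G.dist α s ≤ t) → (∃ s ∈ S₁, G.dist α s ≤ t) → False := by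
    rintro α ⟨s₂, hs₂, hd₂⟩ ⟨s₁, hs₁, hd₁⟩
    have htri := hG.dist_triangle (u := s₁) (v := α) (w := s₂)
    have hcomm : G.dist s₁ α = G.dist α s₁ := SimpleGraph.dist_comm
    have := hgap s₁ hs₁ s₂ hs₂
    omega
  intro n
  induction n with
  | zero =>
    intro α β p hlen hα hβ
    cases p with
    | nil => exact absurd (nilcase α hα hβ) (by simp)
    | cons hadj p₁ => simp [SimpleGraph.Walk.length_cons] at hlen
  | succ n ih =>
    intro α β p hlen hα hβ
    cases p with
    | nil => exact absurd (nilcase α hα hβ) (by simp)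
    | @cons _ α₁ _ hadj p₁ =>
      classical
      have hlen₁ : p₁.length ≤ n := by
        simp only [SimpleGraph.Walk.length_cons] at hlen; omega
      by_cases hdip : ∃ y ∈ p₁.support, ∃ s ∈ S₂, G.dist y s ≤ D₀
      · obtain ⟨y, hy, s, hs, hd⟩ := hdip
        have hlen' : (p₁.dropUntil y hy).length ≤ n :=
          le_trans (SimpleGraph.Walk.length_dropUntil_le p₁ hy) hlen₁
        obtain ⟨x, q, hsupp, hfar, hanch, hclean⟩ :=
          ih y β (p₁.dropUntil y hy) hlen' ⟨s, hs, le_trans hd hD⟩ hβ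
        refine ⟨x, q, ?_, hfar, hanch, hclean⟩
        intro v hv
        have := SimpleGraph.Walk.support_dropUntil_subset p₁ hy (hsupp v hv)
        simp [SimpleGraph.Walk.support_cons]
        exact Or.inr this
      · -- p₁ is S₂-clean beyond distance D₀
        by_cases h1 : ∃ s ∈ S₂, G.dist α₁ s ≤ t
        · obtain ⟨x, q, hsupp, hfar, hanch, hclean⟩ := ih α₁ β p₁ hlen₁ h1 hβ
          refine ⟨x, q, ?_, hfar, hanch, hclean⟩
          intro v hv
          simp [SimpleGraph.Walk.support_cons]
          exact Or.inr (hsupp v hv)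
        · by_cases h2 : ∃ s ∈ S₁, G.dist α₁ s ≤ t
          · -- contradiction with the gap
            exfalso
            obtain ⟨s₂, hs₂, hd₂⟩ := hα
            obtain ⟨s₁, hs₁, hd₁⟩ := h2
            have htri1 := hG.dist_triangle (u := s₁) (v := α₁) (w := s₂)
            have htri2 := hG.dist_triangle (u := α₁) (v := α) (w := s₂)
            have hcomm1 : G.dist s₁ α₁ = G.dist α₁ s₁ := SimpleGraph.dist_comm
            have hcomm2 : G.dist α₁ α = G.dist α α₁ := SimpleGraph.dist_comm
            have hd0 : G.dist α α₁ ≤ 1 := adj_dist_le_one hadj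
            have := hgap s₁ hs₁ s₂ hs₂
            omega
          · -- stop: α₁ is far
            refine ⟨α₁, p₁, ?_, ?_, ?_, ?_⟩
            · intro v hv
              simp [SimpleGraph.Walk.support_cons]
              exact Or.inr hv
            · intro r hr
              rcases hr with hr | hr
              · by_contra hc
                exact h2 ⟨r, hr, by omega⟩
              · by_contra hc
                exact h1 ⟨r, hr, by omega⟩
            · obtain ⟨s₂, hs₂, hd₂⟩ := hα
              refine ⟨s₂, hs₂, ?_⟩
              have htri := hG.dist_triangle (u := α₁) (v := α) (w := s₂)
              have hcomm : G.dist α₁ α = G.dist α α₁ := SimpleGraph.dist_comm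
              have hd0 : G.dist α α₁ ≤ 1 := adj_dist_le_one hadj
              omega
            · intro v hv s hs
              by_contra hc
              exact hdip ⟨v, hv, s, hs, by omega⟩

end Aux

section Machine

variable {V W : Type} {G : SimpleGraph V} {H : SimpleGraph W}

/-- Existence of a minimal cutset inside a given cutset. -/
lemma exists_min_cutset_subset (hG : G.Connected) (hlf : ∀ v : V, (G.neighborSet v).Finite)
    {u v : V} {Amb : Set V} (h : IsCutset G Amb u v) :
    ∃ S ⊆ Amb, IsMinCutset G S u v := by
  have hb : PercPaper.Blocks G u v 0 Amb := by
    intro p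
    obtain ⟨x, hx, hxA⟩ := h p
    exact ⟨x, hx, x, hxA, by rw [SimpleGraph.dist_self]⟩
  obtain ⟨S, hSsub, hSb, hSmin⟩ := PercPaper.exists_minimal_blocks hG hlf u v 0 Amb hb
  have hcut : ∀ T : Set V, PercPaper.Blocks G u v 0 T ↔ IsCutset G T u v := by
    intro T
    constructor
    · intro hb' p
      obtain ⟨g, hg, σ, hσ, hd⟩ := hb' p
      have : G.dist g σ = 0 := Nat.le_zero.mp hd
      have : g = σ := (hG.dist_eq_zero_iff).mp this
      exact ⟨g, hg, this ▸ hσ⟩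
    · intro hc p
      obtain ⟨g, hg, hgT⟩ := hc p
      exact ⟨g, hg, g, hgT, by rw [SimpleGraph.dist_self]⟩
  exact ⟨S, hSsub, (hcut S).mp hSb, fun B hB hBc => hSmin B hB ((hcut B).mpr hBc)⟩

/-- The transfer machine: if `S₁ ∪ S₂` meets every walk between a separated
pair, and the two parts are far apart, then one single part already coarsely
meets every such walk. -/
lemma machine (hG : G.Connected) (hH : H.Connected)
    (hlfG : ∀ v : V, (G.neighborSet v).Finite)
    {B a : ℕ} (hB : cutConnLe G B)
    (φ : V → W) (ψ : W → V)
    (hUφ : ∀ x y : V, H.dist (φ x) (φ y) ≤ a * G.dist x y + a)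
    (hUψ : ∀ w w' : W, G.dist (ψ w) (ψ w') ≤ a * H.dist w w' + a)
    (hLψ : ∀ w w' : W, H.dist w w' ≤ a * G.dist (ψ w) (ψ w') + a^2)
    (hQψφ : ∀ x : V, G.dist (ψ (φ x)) x ≤ a)
    (hQφψ : ∀ w : W, H.dist (φ (ψ w)) w ≤ a)
    (S₁ S₂ : Set W) (x y : W)
    (hsep : ∀ p : H.Walk x y, ∃ g ∈ p.support, g ∈ S₁ ∪ S₂)
    (hgap : ∀ s₁ ∈ S₁, ∀ s₂ ∈ S₂,
      a * (B + 2*(2*a^2+2*a)) + a^2 < H.dist s₁ s₂) :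
    (∀ p : H.Walk x y, ∃ w ∈ p.support, ∃ q ∈ S₁,
        H.dist w q ≤ a*(2*a^2+2*a) + 3*a^2) ∨
    (∀ p : H.Walk x y, ∃ w ∈ p.support, ∃ q ∈ S₂,
        H.dist w q ≤ a*(2*a^2+2*a) + 3*a^2) := by
  classical
  set mu : ℕ := 2*a^2+2*a with hmu
  -- Step A : ψ '' (S₁ ∪ S₂) blocks G-walks from ψ x to ψ y at distance mu
  have hstepφ : ∀ g g' : V, G.Adj g g' → H.dist (φ g) (φ g') ≤ 2*a := by
    intro g g' hadj
    have h1 := hUφ g g'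
    have h2 : G.dist g g' ≤ 1 := PercPaper.adj_dist_le_one hadj
    have hmul : a * G.dist g g' ≤ a * 1 := Nat.mul_le_mul_left a h2
    omega
  have hstepψ : ∀ w w' : W, H.Adj w w' → G.dist (ψ w) (ψ w') ≤ 2*a := by
    intro w w' hadj
    have h1 := hUψ w w'
    have h2 : H.dist w w' ≤ 1 := PercPaper.adj_dist_le_one hadj
    have hmul : a * H.dist w w' ≤ a * 1 := Nat.mul_le_mul_left a h2
    omega
  have hΘ : PercPaper.Blocks G (ψ x) (ψ y) mu (ψ '' (S₁ ∪ S₂)) := by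
    intro p
    obtain ⟨q, hq⟩ := PercPaper.walk_follow hH φ (2*a) hstepφ p
    obtain ⟨pre, hpre⟩ := hH.exists_walk_length_eq_dist x (φ (ψ x))
    obtain ⟨post, hpost⟩ := hH.exists_walk_length_eq_dist (φ (ψ y)) y
    have hsep' := hsep (pre.append (q.append post))
    obtain ⟨g₀, hg₀mem, hg₀S⟩ := hsep'
    -- find a vertex of p whose φ-image is within 2a of g₀
    have key : ∃ g ∈ p.support, H.dist (φ g) g₀ ≤ 2*a := by
      rcases (SimpleGraph.Walk.mem_support_append_iff _ _).mp hg₀mem with h | h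
      · refine ⟨ψ x, SimpleGraph.Walk.start_mem_support p, ?_⟩
        have := PercPaper.dist_end_le_length pre h
        have hle : H.dist g₀ (φ (ψ x)) ≤ a := by
          rw [hpre] at this
          have := hQφψ x
          have hc : H.dist x (φ (ψ x)) = H.dist (φ (ψ x)) x := SimpleGraph.dist_comm
          omega
        have : H.dist (φ (ψ x)) g₀ = H.dist g₀ (φ (ψ x)) := SimpleGraph.dist_comm
        omega
      · rcases (SimpleGraph.Walk.mem_support_append_iff _ _).mp h with h' | h'
        · obtain ⟨g, hg, hd⟩ := hq g₀ h'
          exact ⟨g, hg, by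
            have : H.dist (φ g) g₀ = H.dist g₀ (φ g) := SimpleGraph.dist_comm
            omega⟩
        · refine ⟨ψ y, SimpleGraph.Walk.end_mem_support p, ?_⟩
          have := PercPaper.dist_start_le_length post h'
          rw [hpost] at this
          have h2 := hQφψ y
          have htri := hH.dist_triangle (u := φ (ψ y)) (v := y) (w := g₀)
          have hc1 : H.dist y g₀ = H.dist g₀ y := SimpleGraph.dist_comm
          -- dist (φψy) g₀ ≤ dist (φψy) y + dist y g₀
          omega
    obtain ⟨g, hg, hd⟩ := key
    refine ⟨g, hg, ψ g₀, ⟨g₀, hg₀S, rfl⟩, ?_⟩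
    have h1 := hQψφ g
    have h2 := hUψ (φ g) g₀
    have htri := hG.dist_triangle (u := g) (v := ψ (φ g)) (w := ψ g₀)
    have hc : G.dist g (ψ (φ g)) = G.dist (ψ (φ g)) g := SimpleGraph.dist_comm
    have hmul : a * H.dist (φ g) g₀ ≤ a * (2*a) := Nat.mul_le_mul_left a hd
    have he : a * (2*a) = 2*a^2 := by ring
    have hgoal : G.dist g (ψ g₀) ≤ 2*a^2 + 2*a := by linarith
    omega
  -- Step B : a minimal blocking subset
  obtain ⟨S0, hS0sub, hS0b, hS0min⟩ :=
    PercPaper.exists_minimal_blocks hG hlfG (ψ x) (ψ y) mu (ψ '' (S₁ ∪ S₂)) hΘ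
  -- Step C : nonempty
  obtain ⟨p0⟩ := hG.preconnected (ψ x) (ψ y)
  obtain ⟨g0, -, σ0, hσ0, -⟩ := hS0b p0
  -- Step D/E : minimal cutset inside the mu-neighborhood of S0
  have hNcut : IsCutset G {g : V | ∃ σ ∈ S0, G.dist g σ ≤ mu} (ψ x) (ψ y) := by
    intro p
    obtain ⟨g, hg, σ, hσ, hd⟩ := hS0b p
    exact ⟨g, hg, σ, hσ, hd⟩
  obtain ⟨Ξ, hΞsub, hΞmin⟩ := exists_min_cutset_subset hG hlfG hNcut
  have hΞconn : kConnectedSet G B Ξ := hB (ψ x) (ψ y) Ξ hΞmin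
  -- Step G : every element of S0 has a Ξ-element within mu
  have hGstep : ∀ σ ∈ S0, ∃ ξ ∈ Ξ, G.dist ξ σ ≤ mu := by
    intro σ hσ
    have hprop : S0 \ {σ} ⊂ S0 := by
      constructor
      · exact Set.diff_subset
      · intro hsub
        have := hsub hσ
        simp at this
    have hnb := hS0min _ hprop
    rw [PercPaper.Blocks] at hnb
    push_neg at hnb
    obtain ⟨p, hp⟩ := hnb
    obtain ⟨ξ, hξmem, hξΞ⟩ := hΞmin.1 p
    obtain ⟨sig, hsig, hdsig⟩ := hΞsub hξΞ
    have : sig = σ := by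
      by_contra hne
      have := hp ξ hξmem sig ⟨hsig, hne⟩
      omega
    exact ⟨ξ, hξΞ, this ▸ hdsig⟩
  -- Step H : S0 is (B + 2mu)-chain-connected
  have hchain : ∀ σ ∈ S0, ∀ σ' ∈ S0,
      Relation.ReflTransGen (fun p q => p ∈ S0 ∧ q ∈ S0 ∧ G.dist p q ≤ B + 2*mu) σ σ' := by
    intro σ hσ σ' hσ'
    obtain ⟨ξ, hξ, hdξ⟩ := hGstep σ hσ
    obtain ⟨ξ', hξ', hdξ'⟩ := hGstep σ' hσ'
    have key : ∀ ζ, Relation.ReflTransGen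
        (fun a b => a ∈ Ξ ∧ b ∈ Ξ ∧ kAdj G B a b) ξ ζ →
        ∀ τ ∈ S0, G.dist ζ τ ≤ mu →
        Relation.ReflTransGen (fun p q => p ∈ S0 ∧ q ∈ S0 ∧ G.dist p q ≤ B + 2*mu) σ τ := by
      intro ζ h
      induction h with
      | refl =>
        intro τ hτ hd
        refine Relation.ReflTransGen.single ⟨hσ, hτ, ?_⟩
        have htri := hG.dist_triangle (u := σ) (v := ξ) (w := τ)
        have hc : G.dist σ ξ = G.dist ξ σ := SimpleGraph.dist_comm
        omega
      | tail h step ih =>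
        rename_i ζ₁ ζ₂
        obtain ⟨hζ₁, hζ₂, hka⟩ := step
        intro τ hτ hd
        obtain ⟨τ₁, hτ₁, hdτ₁⟩ := hΞsub hζ₁
        have ih' := ih τ₁ hτ₁ hdτ₁
        refine ih'.tail ⟨hτ₁, hτ, ?_⟩
        have htri1 := hG.dist_triangle (u := τ₁) (v := ζ₁) (w := τ)
        have htri2 := hG.dist_triangle (u := ζ₁) (v := ζ₂) (w := τ)
        have hc : G.dist τ₁ ζ₁ = G.dist ζ₁ τ₁ := SimpleGraph.dist_comm
        have hkb := hka.2
        linarith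
    exact key ξ' (hΞconn ξ hξ ξ' hξ') σ' hσ' hdξ'
  -- Step I : S0 lies over a single side
  have hS0union : ∀ σ ∈ S0, σ ∈ ψ '' S₁ ∪ ψ '' S₂ := by
    intro σ hσ
    have := hS0sub hσ
    rwa [Set.image_union] at this
  have hside : (∀ σ ∈ S0, σ ∈ ψ '' S₁) ∨ (∀ σ ∈ S0, σ ∈ ψ '' S₂) := by
    have hnocross : ∀ p q : V, p ∈ ψ '' S₁ → q ∈ ψ '' S₂ → ¬(G.dist p q ≤ B + 2*mu) := by
      rintro p q ⟨s₁, hs₁, rfl⟩ ⟨s₂, hs₂, rfl⟩ hd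
      have h1 := hLψ s₁ s₂
      have h2 := hgap s₁ hs₁ s₂ hs₂
      have h3 : a * G.dist (ψ s₁) (ψ s₂) ≤ a * (B + 2*mu) := Nat.mul_le_mul_left a hd
      linarith
    rcases hS0union σ0 hσ0 with h | h
    · left
      intro σ hσ
      have hch := hchain σ0 hσ0 σ hσ
      clear hσ
      induction hch with
      | refl => exact h
      | tail hc step ih =>
        rename_i p q
        obtain ⟨hp, hq, hd⟩ := step
        rcases hS0union q hq with h' | h'
        · exact h'
        · exact absurd hd (hnocross p q ih h')
    · right
      intro σ hσ
      have hch := hchain σ0 hσ0 σ hσ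
      clear hσ
      induction hch with
      | refl => exact h
      | tail hc step ih =>
        rename_i p q
        obtain ⟨hp, hq, hd⟩ := step
        rcases hS0union q hq with h' | h'
        · exfalso
          have hcm : G.dist p q = G.dist q p := SimpleGraph.dist_comm
          exact hnocross q p h' ih (by rw [← hcm]; exact hd)
        · exact h'
  -- Step J : conclusion
  have final : ∀ (T : Set W), (∀ σ ∈ S0, σ ∈ ψ '' T) →
      ∀ p : H.Walk x y, ∃ w ∈ p.support, ∃ q ∈ T, H.dist w q ≤ a*mu + 3*a^2 := by
    intro T hT ρ
    obtain ⟨π, hπ⟩ := PercPaper.walk_follow hG ψ (2*a) hstepψ ρ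
    obtain ⟨γ, hγmem, σ, hσ, hdγ⟩ := hS0b π
    obtain ⟨w, hw, hdw⟩ := hπ γ hγmem
    obtain ⟨q, hq, hψq⟩ := hT σ hσ
    refine ⟨w, hw, q, hq, ?_⟩
    have h1 := hLψ w q
    rw [hψq] at h1
    have htri := hG.dist_triangle (u := ψ w) (v := γ) (w := σ)
    have h2 : G.dist (ψ w) σ ≤ 2*a + mu := by omega
    have h3 : a * G.dist (ψ w) σ ≤ a * (2*a + mu) := Nat.mul_le_mul_left a h2
    have he : a * (2*a + mu) = 2*a^2 + a*mu := by rw [hmu]; ring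
    linarith
  rcases hside with h | h
  · left
    intro p
    exact final S₁ h p
  · right
    intro p
    exact final S₂ h p

end Machine

section Assembly

variable {V : Type} {G : SimpleGraph V}

lemma mincut_start {A : Set V} {u v : V} (h : IsMinCutset G A u v) (hu : u ∈ A) :
    A = {u} := by
  by_contra hne
  have hsub : {u} ⊂ A := ⟨Set.singleton_subset_iff.mpr hu, fun hh => hne (le_antisymm hh (Set.singleton_subset_iff.mpr hu))⟩
  exact h.2 {u} hsub (fun w => ⟨u, SimpleGraph.Walk.start_mem_support w, rfl⟩)

lemma mincut_end {A : Set V} {u v : V} (h : IsMinCutset G A u v) (hv : v ∈ A) :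
    A = {v} := by
  by_contra hne
  have hsub : {v} ⊂ A := ⟨Set.singleton_subset_iff.mpr hv, fun hh => hne (le_antisymm hh (Set.singleton_subset_iff.mpr hv))⟩
  exact h.2 {v} hsub (fun w => ⟨v, SimpleGraph.Walk.end_mem_support w, rfl⟩)

/-- From a walk ending at `z` whose support contains `z` exactly once, extract
the last step: a neighbour `az` of `z` together with the walk up to `az`. -/
lemma last_step [DecidableEq V] {u z : V} (j : G.Walk u z) (hne : u ≠ z)
    (honce : j.support.count z = 1) :
    ∃ (az : V) (r : G.Walk u az), G.Adj az z ∧ z ∉ r.support ∧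
      (∀ g ∈ r.support, g ∈ j.support) := by
  classical
  cases hjr : j.reverse with
  | nil =>
    exfalso
    have : j = SimpleGraph.Walk.nil.reverse := by
      rw [← hjr, SimpleGraph.Walk.reverse_reverse]
    rw [SimpleGraph.Walk.reverse_nil] at this
    exact hne (by cases this; rfl)
  | @cons _ az _ hadj r =>
    refine ⟨az, r.reverse, hadj.symm, ?_, ?_⟩
    · -- z ∉ r.reverse.support
      have hsupp : j.reverse.support = z :: r.support := by
        rw [hjr, SimpleGraph.Walk.support_cons]
      have hcount : j.reverse.support.count z = 1 := by
        rw [SimpleGraph.Walk.support_reverse, List.count_reverse]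
        exact honce
      rw [hsupp] at hcount
      simp only [List.count_cons_self] at hcount
      have : r.support.count z = 0 := by omega
      rw [SimpleGraph.Walk.support_reverse, List.mem_reverse]
      exact List.count_eq_zero.mp this
    · intro g hg
      have : g ∈ j.reverse.support := by
        rw [hjr, SimpleGraph.Walk.support_cons]
        right
        rwa [SimpleGraph.Walk.support_reverse, List.mem_reverse] at hg
      rwa [SimpleGraph.Walk.support_reverse, List.mem_reverse] at this

/-- Feet of a point of a minimal cutset: neighbours reachable from `u`
(resp. `v`) by walks avoiding the cutset. -/
lemma feet {P : Set V} {u v : V} (hmin : IsMinCutset G P u v)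
    (hu : u ∉ P) (hv : v ∉ P) {z : V} (hz : z ∈ P) :
    ∃ (az bz : V) (pa : G.Walk u az) (pb : G.Walk v bz),
      G.Adj az z ∧ G.Adj bz z ∧
      (∀ g ∈ pa.support, g ∉ P) ∧ (∀ g ∈ pb.support, g ∉ P) := by
  classical
  have hprop : P \ {z} ⊂ P := by
    constructor
    · exact Set.diff_subset
    · intro hsub
      have := hsub hz
      simp at this
  have hnc := hmin.2 _ hprop
  rw [IsCutset] at hnc
  push_neg at hnc
  obtain ⟨ω, hω⟩ := hnc
  obtain ⟨g, hgmem, hgP⟩ := hmin.1 ω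
  have hgz : g = z := by
    have := hω g hgmem
    by_contra hne
    exact this ⟨hgP, hne⟩
  subst hgz
  -- u-side:
  have hune : u ≠ g := fun h => hu (h ▸ hgP)
  have hvne : v ≠ g := fun h => hv (h ▸ hgP)
  obtain ⟨az, r, hadj, hznr, hrsub⟩ :=
    last_step (ω.takeUntil g hgmem) hune
      (SimpleGraph.Walk.count_support_takeUntil_eq_one ω hgmem)
  have hgrev : g ∈ ω.reverse.support := by
    rw [SimpleGraph.Walk.support_reverse, List.mem_reverse]; exact hgmem
  obtain ⟨bz, r', hadj', hznr', hrsub'⟩ :=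
    last_step (ω.reverse.takeUntil g hgrev) hvne
      (SimpleGraph.Walk.count_support_takeUntil_eq_one ω.reverse hgrev)
  refine ⟨az, bz, r, r', hadj, hadj', ?_, ?_⟩
  · intro x hx hxP
    have hxω : x ∈ ω.support :=
      SimpleGraph.Walk.support_takeUntil_subset ω hgmem (hrsub x hx)
    have hxne : x ≠ g := fun h => hznr (h ▸ hx)
    exact hω x hxω ⟨hxP, hxne⟩
  · intro x hx hxP
    have hxω : x ∈ ω.support := by
      have := SimpleGraph.Walk.support_takeUntil_subset ω.reverse hgrev (hrsub' x hx)
      rwa [SimpleGraph.Walk.support_reverse, List.mem_reverse] at this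
    have hxne : x ≠ g := fun h => hznr' (h ▸ hx)
    exact hω x hxω ⟨hxP, hxne⟩

/-- Walks along a chain of `S₂`-points staying far away from `S₁`. -/
lemma chain_walk (hG : G.Connected) (S₁ S₂ : Set V) (c D0 : ℕ)
    (hc2 : 2*D0 ≤ c)
    (hgap : ∀ s₁ ∈ S₁, ∀ s₂ ∈ S₂, c+1 ≤ G.dist s₁ s₂) :
    ∀ s s' : V, s ∈ S₂ →
      Relation.ReflTransGen (fun p q => p ∈ S₂ ∧ q ∈ S₂ ∧ G.dist p q ≤ c) s s' →
      ∃ w : G.Walk s s', ∀ x ∈ w.support, ∀ r ∈ S₁, D0 < G.dist x r := by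
  intro s s' hs h
  induction h with
  | refl =>
    refine ⟨SimpleGraph.Walk.nil, ?_⟩
    intro x hx r hr
    simp only [SimpleGraph.Walk.support_nil, List.mem_singleton] at hx
    have := hgap r hr s hs
    have hc : G.dist s r = G.dist r s := SimpleGraph.dist_comm
    rw [hx]
    omega
  | tail h step ih =>
    rename_i q q'
    obtain ⟨hq, hq', hd⟩ := step
    obtain ⟨w₀, hw₀⟩ := ih
    obtain ⟨g, hg⟩ := hG.exists_walk_length_eq_dist q q'
    refine ⟨w₀.append g, ?_⟩
    intro x hx r hr
    rcases (SimpleGraph.Walk.mem_support_append_iff _ _).mp hx with h' | h'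
    · exact hw₀ x h' r hr
    · have hsum : G.dist q x + G.dist x q' ≤ c := by
        have := dist_add_dist_le_length g h'
        omega
      have h1 := hgap r hr q hq
      have h2 := hgap r hr q' hq'
      have htri1 := hG.dist_triangle (u := r) (v := x) (w := q)
      have htri2 := hG.dist_triangle (u := r) (v := x) (w := q')
      have hc1 : G.dist x q = G.dist q x := SimpleGraph.dist_comm
      have hc2' : G.dist x r = G.dist r x := SimpleGraph.dist_comm
      omega

end Assembly


end QICutsetProof

/-- Remark: `C < ∞` is a quasi-isometry invariant,
quantitatively; answers Question 2 of Babson–Benjamini.  For all `A, B ≥ 1`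
there is `C = C(A,B)` such that if `G` and `H` are `A`-quasi-isometric graphs
and `C(G) ≤ B`, then `C(H) ≤ C`. -/
theorem cutConn_quasiIsometry :
    ∀ A : ℝ, 1 ≤ A → ∀ B : ℕ, 1 ≤ B → ∃ C : ℕ,
      ∀ (V W : Type) (G : SimpleGraph V) (H : SimpleGraph W),
        Nonempty V → Nonempty W → G.Connected → H.Connected →
        (∀ v : V, (G.neighborSet v).Finite) →
        (∀ w : W, (H.neighborSet w).Finite) →
        QuasiIsometric A G H → cutConnLe G B → cutConnLe H C := by
  intro A hA B hBpos
  refine ⟨⌈A⌉₊^2 + ⌈A⌉₊*(B + 2*(2*⌈A⌉₊^2+2*⌈A⌉₊))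
      + 4*(⌈A⌉₊*(2*⌈A⌉₊^2+2*⌈A⌉₊) + 3*⌈A⌉₊^2) + 4, ?_⟩
  intro V W G H _ _ hG hH hlfG hlfH hQI hcutG
  classical
  set a : ℕ := ⌈A⌉₊ with haa
  set mu : ℕ := 2*a^2+2*a with hmu
  set D0 : ℕ := a*mu + 3*a^2 with hD0
  set t : ℕ := D0 + 1 with ht
  set cc : ℕ := a^2 + a*(B + 2*mu) + 4*D0 + 4 with hcc
  have hA0 : (0:ℝ) < A := by linarith
  have haA : A ≤ (a:ℝ) := Nat.le_ceil A
  have ha1 : 1 ≤ a := Nat.ceil_pos.mpr hA0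
  have hcc4 : 4*D0 + 4 ≤ cc := by
    rw [hcc]
    linarith [Nat.zero_le (a^2), Nat.zero_le (a*(B + 2*mu))]
  have hD0e : a*(2*a^2+2*a) + 3*a^2 = D0 := by rw [hD0, hmu]
  obtain ⟨φ, ψ, hφ, hψ, hψφ, hφψ⟩ := hQI
  -- ℕ-level quasi-isometry estimates
  have hUφn : ∀ x y : V, H.dist (φ x) (φ y) ≤ a * G.dist x y + a := by
    intro x y
    have h := (hφ.1 x y).2
    have h0 : (0:ℝ) ≤ (G.dist x y : ℝ) := Nat.cast_nonneg _
    have hx : (H.dist (φ x) (φ y) : ℝ) ≤ ((a * G.dist x y + a : ℕ) : ℝ) := by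
      push_cast
      nlinarith
    exact_mod_cast hx
  have hUψn : ∀ w w' : W, G.dist (ψ w) (ψ w') ≤ a * H.dist w w' + a := by
    intro w w'
    have h := (hψ.1 w w').2
    have h0 : (0:ℝ) ≤ (H.dist w w' : ℝ) := Nat.cast_nonneg _
    have hx : (G.dist (ψ w) (ψ w') : ℝ) ≤ ((a * H.dist w w' + a : ℕ) : ℝ) := by
      push_cast
      nlinarith
    exact_mod_cast hx
  have hLψn : ∀ w w' : W, H.dist w w' ≤ a * G.dist (ψ w) (ψ w') + a^2 := by
    intro w w'
    have h := (hψ.1 w w').1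
    have h0 : (0:ℝ) ≤ (G.dist (ψ w) (ψ w') : ℝ) := Nat.cast_nonneg _
    have h5 : (1/A) * (H.dist w w' : ℝ) ≤ (G.dist (ψ w) (ψ w') : ℝ) + A := by linarith
    have h6 : A * ((1/A) * (H.dist w w' : ℝ)) ≤ A * ((G.dist (ψ w) (ψ w') : ℝ) + A) :=
      mul_le_mul_of_nonneg_left h5 hA0.le
    have h7 : A * ((1/A) * (H.dist w w' : ℝ)) = (H.dist w w' : ℝ) := by
      field_simp
    have h8 : (H.dist w w' : ℝ) ≤ A * (G.dist (ψ w) (ψ w') : ℝ) + A * A := by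
      rw [h7] at h6
      nlinarith
    have h9 : A * (G.dist (ψ w) (ψ w') : ℝ) ≤ (a:ℝ) * (G.dist (ψ w) (ψ w') : ℝ) :=
      mul_le_mul_of_nonneg_right haA h0
    have h10 : A * A ≤ (a:ℝ) * (a:ℝ) := mul_le_mul haA haA hA0.le (Nat.cast_nonneg _)
    have hx : (H.dist w w' : ℝ) ≤ ((a * G.dist (ψ w) (ψ w') + a^2 : ℕ) : ℝ) := by
      push_cast
      nlinarith
    exact_mod_cast hx
  have hQψφn : ∀ x : V, G.dist (ψ (φ x)) x ≤ a := by
    intro x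
    have hx : (G.dist (ψ (φ x)) x : ℝ) ≤ ((a : ℕ) : ℝ) := le_trans (hψφ x) haA
    exact_mod_cast hx
  have hQφψn : ∀ w : W, H.dist (φ (ψ w)) w ≤ a := by
    intro w
    have hx : (H.dist (φ (ψ w)) w : ℝ) ≤ ((a : ℕ) : ℝ) := le_trans (hφψ w) haA
    exact_mod_cast hx
  -- the cut-connectivity statement for H
  intro u v P hmin x₀ hx₀ y₀ hy₀
  by_cases huP : u ∈ P
  · have hPs := mincut_start hmin huP
    rw [hPs] at hx₀ hy₀
    simp only [Set.mem_singleton_iff] at hx₀ hy₀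
    rw [hx₀, hy₀]
  · by_cases hvP : v ∈ P
    · have hPs := mincut_end hmin hvP
      rw [hPs] at hx₀ hy₀
      simp only [Set.mem_singleton_iff] at hx₀ hy₀
      rw [hx₀, hy₀]
    · by_contra hcon
      set S₂ : Set W := {w | w ∈ P ∧
        Relation.ReflTransGen (fun p q => p ∈ P ∧ q ∈ P ∧ kAdj H cc p q) x₀ w} with hS₂def
      set S₁ : Set W := P \ S₂ with hS₁def
      have hx₀2 : x₀ ∈ S₂ := ⟨hx₀, Relation.ReflTransGen.refl⟩
      have hy₀1 : y₀ ∈ S₁ := ⟨hy₀, fun hh => hcon hh.2⟩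
      have hPU : ∀ g, g ∈ P → g ∈ S₁ ∪ S₂ := by
        intro g hg
        by_cases h : g ∈ S₂
        · exact Or.inr h
        · exact Or.inl ⟨hg, h⟩
      have hgapH : ∀ s₁ ∈ S₁, ∀ s₂ ∈ S₂, cc + 1 ≤ H.dist s₁ s₂ := by
        intro s₁ hs₁ s₂ hs₂
        by_contra hlt
        push_neg at hlt
        have hd : H.dist s₁ s₂ ≤ cc := by omega
        rcases Nat.eq_zero_or_pos (H.dist s₁ s₂) with h0 | h0
        · have he : s₁ = s₂ := (hH.dist_eq_zero_iff).mp h0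
          exact hs₁.2 (he ▸ hs₂)
        · have hcm : H.dist s₂ s₁ = H.dist s₁ s₂ := SimpleGraph.dist_comm
          have hk : kAdj H cc s₂ s₁ := ⟨by omega, by omega⟩
          exact hs₁.2 ⟨hs₁.1, hs₂.2.tail ⟨hs₂.1, hs₁.1, hk⟩⟩
      -- feet at x₀ (in S₂) and y₀ (in S₁)
      obtain ⟨a2, b2, pa2, pb2, hadja2, hadjb2, hava2, havb2⟩ := feet hmin huP hvP hx₀
      obtain ⟨a1, b1, pa1, pb1, hadja1, hadjb1, hava1, havb1⟩ := feet hmin huP hvP hy₀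
      -- the two sides of the witness walk
      have hgap2t : ∀ s₁ ∈ S₁, ∀ s₂ ∈ S₂, 2*t+2 ≤ H.dist s₁ s₂ := by
        intro s₁ hs₁ s₂ hs₂
        have := hgapH s₁ hs₁ s₂ hs₂
        omega
      -- u-side
      have hWpre_Du : ∀ g ∈ (pa2.reverse.append pa1).support,
          ∃ q : H.Walk u g, ∀ z ∈ q.support, z ∉ P := by
        intro g hg
        rcases (SimpleGraph.Walk.mem_support_append_iff _ _).mp hg with h | h
        · have h' : g ∈ pa2.support := by
            rwa [SimpleGraph.Walk.support_reverse, List.mem_reverse] at h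
          exact ⟨pa2.takeUntil g h',
            fun z hz => hava2 z (SimpleGraph.Walk.support_takeUntil_subset _ _ hz)⟩
        · exact ⟨pa1.takeUntil g h,
            fun z hz => hava1 z (SimpleGraph.Walk.support_takeUntil_subset _ _ hz)⟩
      obtain ⟨xt, q1, hq1sub, hxfar, hxanch, hq1clean⟩ :=
        extract hH S₁ S₂ t D0 (by omega) hgap2t (pa2.reverse.append pa1).length a2 a1
          (pa2.reverse.append pa1) le_rfl
          ⟨x₀, hx₀2, le_trans (adj_dist_le_one hadja2) (by omega)⟩
          ⟨y₀, hy₀1, le_trans (adj_dist_le_one hadja1) (by omega)⟩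
      -- v-side
      have hWsuf_Dv : ∀ g ∈ (pb2.reverse.append pb1).support,
          ∃ q : H.Walk v g, ∀ z ∈ q.support, z ∉ P := by
        intro g hg
        rcases (SimpleGraph.Walk.mem_support_append_iff _ _).mp hg with h | h
        · have h' : g ∈ pb2.support := by
            rwa [SimpleGraph.Walk.support_reverse, List.mem_reverse] at h
          exact ⟨pb2.takeUntil g h',
            fun z hz => havb2 z (SimpleGraph.Walk.support_takeUntil_subset _ _ hz)⟩
        · exact ⟨pb1.takeUntil g h,
            fun z hz => havb1 z (SimpleGraph.Walk.support_takeUntil_subset _ _ hz)⟩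
      obtain ⟨yt, q2, hq2sub, hyfar, hyanch, hq2clean⟩ :=
        extract hH S₁ S₂ t D0 (by omega) hgap2t (pb2.reverse.append pb1).length b2 b1
          (pb2.reverse.append pb1) le_rfl
          ⟨x₀, hx₀2, le_trans (adj_dist_le_one hadjb2) (by omega)⟩
          ⟨y₀, hy₀1, le_trans (adj_dist_le_one hadjb1) (by omega)⟩
      -- the separated pair (xt, yt)
      obtain ⟨pxt, hpxt⟩ := hWpre_Du xt (hq1sub xt (SimpleGraph.Walk.start_mem_support q1))
      obtain ⟨pyt, hpyt⟩ := hWsuf_Dv yt (hq2sub yt (SimpleGraph.Walk.start_mem_support q2))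
      have hsepp : ∀ ρ : H.Walk xt yt, ∃ g ∈ ρ.support, g ∈ S₁ ∪ S₂ := by
        intro ρ
        obtain ⟨g, hg, hgP⟩ := hmin.1 (pxt.append (ρ.append pyt.reverse))
        rcases (SimpleGraph.Walk.mem_support_append_iff _ _).mp hg with h | h
        · exact absurd hgP (hpxt g h)
        · rcases (SimpleGraph.Walk.mem_support_append_iff _ _).mp h with h' | h'
          · exact ⟨g, h', hPU g hgP⟩
          · exfalso
            apply hpyt g ?_ hgP
            rwa [SimpleGraph.Walk.support_reverse, List.mem_reverse] at h'
      -- machine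
      have hgapmach : ∀ s₁ ∈ S₁, ∀ s₂ ∈ S₂,
          a * (B + 2*(2*a^2+2*a)) + a^2 < H.dist s₁ s₂ := by
        intro s₁ hs₁ s₂ hs₂
        have h1 := hgapH s₁ hs₁ s₂ hs₂
        have h2 : a * (B + 2*(2*a^2+2*a)) + a^2 ≤ cc := by
          rw [hcc, hmu]
          linarith [Nat.zero_le (4*D0+4)]
        omega
      have hmach := machine hG hH hlfG hcutG φ ψ hUφn hUψn hLψn hQψφn hQφψn
        S₁ S₂ xt yt hsepp hgapmach
      -- the S₂-avoiding walk ω₂ from xt to yt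
      have hadj_ap : H.Adj a1 y₀ := hadja1
      have hadj_yb : H.Adj y₀ b1 := hadjb1.symm
      have hω₂clean : ∀ g ∈ (q1.append (SimpleGraph.Walk.cons hadj_ap
          (SimpleGraph.Walk.cons hadj_yb q2.reverse))).support,
          ∀ s ∈ S₂, D0 < H.dist g s := by
        intro g hg s hs
        rcases (SimpleGraph.Walk.mem_support_append_iff _ _).mp hg with h | h
        · exact hq1clean g h s hs
        · rw [SimpleGraph.Walk.support_cons, List.mem_cons] at h
          rcases h with h | h
          · rw [h]
            have h1 := hgapH y₀ hy₀1 s hs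
            have htri := hH.dist_triangle (u := y₀) (v := a1) (w := s)
            have hd1 : H.dist y₀ a1 ≤ 1 := adj_dist_le_one hadja1.symm
            omega
          · rw [SimpleGraph.Walk.support_cons, List.mem_cons] at h
            rcases h with h | h
            · rw [h]
              have h1 := hgapH y₀ hy₀1 s hs
              omega
            · rw [SimpleGraph.Walk.support_reverse, List.mem_reverse] at h
              exact hq2clean g h s hs
      rcases hmach with hm | hm
      · -- S₁ side: contradiction with the S₁-avoiding walk ω₁
        obtain ⟨s, hsS₂, hdxs⟩ := hxanch
        obtain ⟨s', hs'S₂, hdys⟩ := hyanch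
        -- lift the chain into S₂
        have hlift : ∀ w', Relation.ReflTransGen
            (fun p q => p ∈ P ∧ q ∈ P ∧ kAdj H cc p q) x₀ w' →
            Relation.ReflTransGen
              (fun p q => p ∈ S₂ ∧ q ∈ S₂ ∧ H.dist p q ≤ cc) x₀ w' := by
          intro w' h
          induction h with
          | refl => exact Relation.ReflTransGen.refl
          | tail h step ih =>
            rename_i q q'
            have hq2 : q ∈ S₂ := ⟨step.1, h⟩
            have hq'2 : q' ∈ S₂ := ⟨step.2.1, h.tail step⟩
            exact ih.tail ⟨hq2, hq'2, step.2.2.2⟩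
        have hsymm : Symmetric (fun p q : W => p ∈ S₂ ∧ q ∈ S₂ ∧ H.dist p q ≤ cc) := by
          rintro p q ⟨h1, h2, h3⟩
          exact ⟨h2, h1, by rwa [SimpleGraph.dist_comm]⟩
        have hRTG : Relation.ReflTransGen
            (fun p q => p ∈ S₂ ∧ q ∈ S₂ ∧ H.dist p q ≤ cc) s s' :=
          Relation.ReflTransGen.trans
            ((@Relation.ReflTransGen.stdSymm _ _ ⟨fun a b h => hsymm h⟩).symm _ _ (hlift s hsS₂.2))
            (hlift s' hs'S₂.2)
        obtain ⟨cw, hcw⟩ := chain_walk hH S₁ S₂ cc D0 (by omega) hgapH s s' hsS₂ hRTG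
        obtain ⟨g1, hg1⟩ := hH.exists_walk_length_eq_dist xt s
        obtain ⟨g2, hg2⟩ := hH.exists_walk_length_eq_dist s' yt
        obtain ⟨w, hw, qq, hqq, hd⟩ := hm (g1.append (cw.append g2))
        rw [hD0e] at hd
        have hcm : H.dist w qq = H.dist qq w := SimpleGraph.dist_comm
        rcases (SimpleGraph.Walk.mem_support_append_iff _ _).mp hw with h | h
        · have hws : H.dist w s ≤ t + 1 := by
            have := dist_end_le_length g1 h
            rw [hg1] at this
            omega
          have h1 := hgapH qq hqq s hsS₂
          have htri := hH.dist_triangle (u := qq) (v := w) (w := s)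
          omega
        · rcases (SimpleGraph.Walk.mem_support_append_iff _ _).mp h with h' | h'
          · have := hcw w h' qq hqq
            omega
          · have hws : H.dist s' w ≤ t + 1 := by
              have := dist_start_le_length g2 h'
              rw [hg2] at this
              have hcm2 : H.dist s' yt = H.dist yt s' := SimpleGraph.dist_comm
              omega
            have h1 := hgapH qq hqq s' hs'S₂
            have htri := hH.dist_triangle (u := qq) (v := w) (w := s')
            have hcm3 : H.dist w s' = H.dist s' w := SimpleGraph.dist_comm
            omega
      · -- S₂ side: contradiction with ω₂
        obtain ⟨w, hw, qq, hqq, hd⟩ := hm (q1.append (SimpleGraph.Walk.cons hadj_ap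
          (SimpleGraph.Walk.cons hadj_yb q2.reverse)))
        rw [hD0e] at hd
        have := hω₂clean w hw qq hqq
        omega


end PercPaper
end
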